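/- arXiv:2202.01754 — 6 statements merged into one kernel-verified Lean document; each statement's English description precedes it below -/
import Mathlib

section
/- Let Q : [0, 1] → ℝ be Lipschitz continuous. Then there exists exactly one function β ∈ C²([0, 1]) satisfying β(0) = 1, β′(0) = 0, and β″(s) + (3/s)β′(s) + Q(s)β(s) = 0 for every s ∈ (0, 1]. -/
open Set

section SLCHelpers
open MeasureTheory intervalIntegral Filter Topology


noncomputable def SLC.I1 (g : ℝ → ℝ) (s : ℝ) : ℝ := ∫ u in (0:ℝ)..s, u * g u
noncomputable def SLC.I3 (g : ℝ → ℝ) (s : ℝ) : ℝ := ∫ u in (0:ℝ)..s, u^3 * g u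
noncomputable def SLC.J (g : ℝ → ℝ) (s : ℝ) : ℝ :=
  ∫ u in (0:ℝ)..s, (u/2 - u^3/(2*s^2)) * g u

namespace SLC

variable {g : ℝ → ℝ}

lemma J_zero (g : ℝ → ℝ) : J g 0 = 0 := integral_same

lemma I1_zero (g : ℝ → ℝ) : I1 g 0 = 0 := integral_same

lemma I3_zero (g : ℝ → ℝ) : I3 g 0 = 0 := integral_same

lemma J_eq (hg : Continuous g) (s : ℝ) :
    J g s = I1 g s / 2 - I3 g s / (2 * s^2) := by
  rcases eq_or_ne s 0 with rfl | hs
  · simp [J, I1, I3]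
  · have h1 : IntervalIntegrable (fun u => u * g u / 2) volume 0 s :=
      (by continuity : Continuous fun u : ℝ => u * g u / 2).intervalIntegrable _ _
    have h2 : IntervalIntegrable (fun u => u^3 * g u / (2*s^2)) volume 0 s :=
      (by continuity : Continuous fun u : ℝ => u^3 * g u / (2*s^2)).intervalIntegrable _ _
    have : J g s = ∫ u in (0:ℝ)..s, (u * g u / 2 - u^3 * g u / (2*s^2)) := by
      unfold J; apply integral_congr; intro u _; ring
    rw [this, integral_sub h1 h2, intervalIntegral.integral_div, intervalIntegral.integral_div]
    rfl

lemma int_pow_le (hg : Continuous g) (m : ℕ) {C s : ℝ} (hs : 0 ≤ s)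
    (hb : ∀ u ∈ Icc 0 s, |g u| ≤ C) :
    |∫ u in (0:ℝ)..s, u^m * g u| ≤ C * s^(m+1) / (m+1) := by
  have hint : IntervalIntegrable (fun u : ℝ => u^m * g u) volume 0 s :=
    (by continuity : Continuous fun u : ℝ => u^m * g u).intervalIntegrable _ _
  have habs : IntervalIntegrable (fun u : ℝ => |u^m * g u|) volume 0 s := hint.abs
  have hCint : IntervalIntegrable (fun u : ℝ => C * u^m) volume 0 s :=
    (by continuity : Continuous fun u : ℝ => C * u^m).intervalIntegrable _ _
  calc |∫ u in (0:ℝ)..s, u^m * g u| ≤ ∫ u in (0:ℝ)..s, |u^m * g u| := by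
        rw [← Real.norm_eq_abs]
        exact (intervalIntegral.norm_integral_le_integral_norm hs).trans_eq
          (by simp [Real.norm_eq_abs, abs_mul])
    _ ≤ ∫ u in (0:ℝ)..s, C * u^m := by
        apply integral_mono_on hs habs hCint
        intro u hu
        rw [abs_mul, abs_pow, abs_of_nonneg hu.1, mul_comm C (u^m)]
        exact mul_le_mul_of_nonneg_left (hb u hu) (pow_nonneg hu.1 m)
    _ = C * (s^(m+1) / (m+1)) := by
        rw [intervalIntegral.integral_const_mul, integral_pow]; simp
    _ = C * s^(m+1) / (m+1) := by ring

lemma I3_le (hg : Continuous g) {C s : ℝ} (hs : 0 ≤ s)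
    (hb : ∀ u ∈ Icc 0 s, |g u| ≤ C) : |I3 g s| ≤ C * s^4 / 4 := by
  have := int_pow_le hg 3 hs hb
  norm_num at this
  exact this

lemma J_le (hg : Continuous g) (n : ℕ) {C s : ℝ} (hs : 0 ≤ s)
    (hb : ∀ u ∈ Icc 0 s, |g u| ≤ C * u^(2*n)) :
    |J g s| ≤ C / (4*(n+1)) * s^(2*n+2) := by
  have hker : ∀ u ∈ Icc (0:ℝ) s, |(u/2 - u^3/(2*s^2))| ≤ u / 2 := by
    intro u hu
    rcases eq_or_ne s 0 with rfl | hs0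
    · have : u = 0 := le_antisymm hu.2 hu.1
      simp [this]
    · have hs' : 0 < s := lt_of_le_of_ne hs (Ne.symm hs0)
      have h1 : u^3/(2*s^2) ≤ u/2 := by
        rw [div_le_div_iff₀ (by positivity) (by norm_num)]
        have hu2 : u^2 ≤ s^2 := by nlinarith [hu.1, hu.2]
        nlinarith [mul_le_mul_of_nonneg_left hu2 hu.1]
      have h0 : 0 ≤ u^3/(2*s^2) := div_nonneg (pow_nonneg hu.1 3) (by positivity)
      rw [abs_of_nonneg (by linarith)]
      linarith
  have hcont : Continuous fun u : ℝ => (u/2 - u^3/(2*s^2)) * g u := by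
    have : Continuous fun u : ℝ => (u/2 - u^3/(2*s^2)) := by continuity
    exact this.mul hg
  have hint := hcont.intervalIntegrable (μ := volume) 0 s
  have hCint : IntervalIntegrable (fun u : ℝ => C/2 * u^(2*n+1)) volume 0 s :=
    (by continuity : Continuous fun u : ℝ => C/2 * u^(2*n+1)).intervalIntegrable _ _
  calc |∫ u in (0:ℝ)..s, (u/2 - u^3/(2*s^2)) * g u|
      ≤ ∫ u in (0:ℝ)..s, |(u/2 - u^3/(2*s^2)) * g u| := by
        rw [← Real.norm_eq_abs]
        exact (intervalIntegral.norm_integral_le_integral_norm hs).trans_eq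
          (by simp [Real.norm_eq_abs, abs_mul])
    _ ≤ ∫ u in (0:ℝ)..s, C/2 * u^(2*n+1) := by
        apply integral_mono_on hs hint.abs hCint
        intro u hu
        rw [abs_mul]
        calc |u/2 - u^3/(2*s^2)| * |g u| ≤ (u/2) * (C * u^(2*n)) := by
              apply mul_le_mul (hker u hu) (hb u hu) (abs_nonneg _) (by linarith [hu.1])
          _ = C/2 * u^(2*n+1) := by ring
    _ = C / (4*(n+1)) * s^(2*n+2) := by
        rw [intervalIntegral.integral_const_mul, integral_pow]
        have h1 : ((2*n+1 : ℕ):ℝ) + 1 ≠ 0 := by positivity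
        have h2 : (4:ℝ)*((n:ℝ)+1) ≠ 0 := by positivity
        push_cast at h1 ⊢
        field_simp
        rw [zero_pow (by omega : 2 * n + 1 + 1 ≠ 0)]; ring

lemma hasDerivAt_I1 (hg : Continuous g) (s : ℝ) : HasDerivAt (I1 g) (s * g s) s := by
  have hc : Continuous fun u : ℝ => u * g u := by continuity
  exact integral_hasDerivAt_right (hc.intervalIntegrable _ _)
    (hc.stronglyMeasurableAtFilter _ _) hc.continuousAt

lemma hasDerivAt_I3 (hg : Continuous g) (s : ℝ) : HasDerivAt (I3 g) (s^3 * g s) s := by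
  have hc : Continuous fun u : ℝ => u^3 * g u := by continuity
  exact integral_hasDerivAt_right (hc.intervalIntegrable _ _)
    (hc.stronglyMeasurableAtFilter _ _) hc.continuousAt

lemma I3_div_tendsto (hg : Continuous g) :
    Tendsto (fun s => I3 g s / s^4) (𝓝[>] 0) (𝓝 (g 0 / 4)) := by
  rw [Metric.tendsto_nhdsWithin_nhds]
  intro ε hε
  obtain ⟨δ, hδ, hδ'⟩ := Metric.continuousAt_iff.1 (hg.continuousAt (x := 0)) (ε/2) (by linarith)
  refine ⟨δ, hδ, ?_⟩
  intro s hs hsd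
  have hs0 : (0:ℝ) < s := hs
  rw [Real.dist_eq, sub_zero, abs_of_pos hs0] at hsd
  have h1 : I3 g s = (∫ u in (0:ℝ)..s, u^3 * (g u - g 0)) + g 0 * s^4 / 4 := by
    have hcont1 : Continuous fun u : ℝ => u^3 * (g u - g 0) := by continuity
    have hcont2 : Continuous fun u : ℝ => u^3 * g 0 := by continuity
    unfold I3
    rw [integral_congr (g := fun u => u^3 * (g u - g 0) + u^3 * g 0)
        (fun u _ => by ring),
      integral_add (hcont1.intervalIntegrable _ _) (hcont2.intervalIntegrable _ _)]
    congr 1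
    rw [intervalIntegral.integral_mul_const, integral_pow]
    norm_num
    ring
  have hb : |∫ u in (0:ℝ)..s, u^3 * (g u - g 0)| ≤ (ε/2) * s^4 / 4 := by
    have := int_pow_le (g := fun u => g u - g 0) (by continuity) 3 (le_of_lt hs0)
      (fun u hu => by
        have : dist u 0 < δ := by
          rw [Real.dist_eq, sub_zero, abs_of_nonneg hu.1]; exact lt_of_le_of_lt hu.2 hsd
        exact le_of_lt (hδ' this))
    norm_num at this ⊢
    exact this
  have hs4 : (0:ℝ) < s^4 := by positivity
  rw [Real.dist_eq]
  have heq : I3 g s / s^4 - g 0 / 4 = (∫ u in (0:ℝ)..s, u^3 * (g u - g 0)) / s^4 := by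
    rw [h1]; field_simp; ring
  rw [heq, abs_div, abs_of_pos hs4]
  calc |∫ u in (0:ℝ)..s, u^3 * (g u - g 0)| / s^4 ≤ ((ε/2) * s^4 / 4) / s^4 := by gcongr
    _ = ε/8 := by field_simp; ring
    _ < ε := by linarith

lemma contOn_J (hg : Continuous g) : ContinuousOn (J g) (Icc 0 1) := by
  obtain ⟨M, hM⟩ : ∃ M, ∀ u ∈ Icc (0:ℝ) 1, |g u| ≤ M := by
    obtain ⟨M, hM⟩ := (isCompact_Icc (a := (0:ℝ)) (b := 1)).exists_bound_of_continuousOn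
      hg.continuousOn
    exact ⟨M, fun u hu => hM u hu⟩
  have hF : ∀ s, J g s = I1 g s / 2 - I3 g s / (2 * s^2) := J_eq hg
  rw [continuousOn_congr (fun s _ => hF s)]
  intro s hs
  rcases eq_or_ne s 0 with rfl | hs0
  · -- continuity at 0 within Icc
    have hI1 : Tendsto (fun t => I1 g t / 2) (𝓝[Icc (0:ℝ) 1] 0) (𝓝 0) := by
      have := ((hasDerivAt_I1 hg 0).continuousAt).continuousWithinAt (s := Icc (0:ℝ) 1)
      have h0 : I1 g 0 = 0 := I1_zero g
      simpa [ContinuousWithinAt, h0] using this.div_const 2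
    have hI3 : Tendsto (fun t => I3 g t / (2 * t^2)) (𝓝[Icc (0:ℝ) 1] 0) (𝓝 0) := by
      apply squeeze_zero_norm' (a := fun t => M * t^2 / 8)
      · filter_upwards [self_mem_nhdsWithin] with t ht
        rcases eq_or_ne t 0 with rfl | ht0
        · simp [I3_zero]
        · have ht' : 0 < t := lt_of_le_of_ne ht.1 (Ne.symm ht0)
          have hb := I3_le hg (le_of_lt ht') (fun u hu => hM u ⟨hu.1, le_trans hu.2 ht.2⟩)
          rw [Real.norm_eq_abs, abs_div, abs_of_pos (by positivity : (0:ℝ) < 2 * t^2)]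
          calc |I3 g t| / (2 * t^2) ≤ (M * t^4 / 4) / (2 * t^2) := by gcongr
            _ = M * t^2 / 8 := by field_simp; ring
      · have : Tendsto (fun t : ℝ => M * t^2 / 8) (𝓝 0) (𝓝 (M * 0^2 / 8)) := by
          apply Continuous.tendsto; continuity
        simpa using this.mono_left nhdsWithin_le_nhds
    have : Tendsto (fun t => I1 g t / 2 - I3 g t / (2 * t^2)) (𝓝[Icc (0:ℝ) 1] 0) (𝓝 0) := by
      simpa using hI1.sub hI3
    have h00 : I1 g 0 / 2 - I3 g 0 / (2 * 0^2) = 0 := by simp [I1_zero, I3_zero]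
    unfold ContinuousWithinAt
    convert this using 2
  · have : ContinuousAt (fun t => I1 g t / 2 - I3 g t / (2 * t^2)) s := by
      apply ContinuousAt.sub
      · exact ((hasDerivAt_I1 hg s).continuousAt).div_const 2
      · exact ((hasDerivAt_I3 hg s).continuousAt).div (by fun_prop) (by positivity)
    exact this.continuousWithinAt


lemma hasDerivAt_I3_div {g : ℝ → ℝ} (hg : Continuous g) {s : ℝ} (hs : s ≠ 0) :
    HasDerivAt (fun t => I3 g t / (2*t^2)) (s * g s / 2 - I3 g s / s^3) s := by
  have h1 : HasDerivAt (fun t : ℝ => 2*t^2) (2*(2*s)) s := by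
    simpa using (hasDerivAt_pow 2 s).const_mul 2
  have h2 := (hasDerivAt_I3 hg s).div h1 (by positivity)
  refine h2.congr_deriv ?_
  field_simp

lemma I3_div_sq_tendsto {g : ℝ → ℝ} (hg : Continuous g) :
    Tendsto (fun t => I3 g t / (2*t^2)) (𝓝[Icc (0:ℝ) 1] 0) (𝓝 0) := by
  obtain ⟨M, hM⟩ : ∃ M, ∀ u ∈ Icc (0:ℝ) 1, |g u| ≤ M := by
    obtain ⟨M, hM⟩ := (isCompact_Icc (a := (0:ℝ)) (b := 1)).exists_bound_of_continuousOn
      hg.continuousOn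
    exact ⟨M, fun u hu => hM u hu⟩
  apply squeeze_zero_norm' (a := fun t => M * t^2 / 8)
  · filter_upwards [self_mem_nhdsWithin] with t ht
    rcases eq_or_ne t 0 with rfl | ht0
    · simp [I3_zero]
    · have ht' : 0 < t := lt_of_le_of_ne ht.1 (Ne.symm ht0)
      have hb := I3_le hg (le_of_lt ht') (fun u hu => hM u ⟨hu.1, le_trans hu.2 ht.2⟩)
      rw [Real.norm_eq_abs, abs_div, abs_of_pos (by positivity : (0:ℝ) < 2 * t^2)]
      calc |I3 g t| / (2 * t^2) ≤ (M * t^4 / 4) / (2 * t^2) := by gcongr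
        _ = M * t^2 / 8 := by field_simp; ring
  · have : Tendsto (fun t : ℝ => M * t^2 / 8) (𝓝 0) (𝓝 (M * 0^2 / 8)) := by
      apply Continuous.tendsto; continuity
    simpa using this.mono_left nhdsWithin_le_nhds

noncomputable def clamp (u : ℝ) : ↥(Icc (0:ℝ) 1) :=
  ⟨max 0 (min 1 u), ⟨le_max_left _ _, max_le zero_le_one (min_le_left _ _)⟩⟩

lemma continuous_clamp : Continuous clamp :=
  Continuous.subtype_mk (Continuous.max continuous_const (Continuous.min continuous_const continuous_id)) _

lemma clamp_of_mem {u : ℝ} (hu : u ∈ Icc (0:ℝ) 1) : (clamp u : ℝ) = u := by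
  simp only [clamp]
  rw [min_eq_right hu.2, max_eq_right hu.1]

noncomputable def ext' (b : C(↥(Icc (0:ℝ) 1), ℝ)) : ℝ → ℝ := fun u => b (clamp u)

lemma continuous_ext' (b : C(↥(Icc (0:ℝ) 1), ℝ)) : Continuous (ext' b) :=
  b.continuous.comp continuous_clamp

lemma ext'_apply_mem (b : C(↥(Icc (0:ℝ) 1), ℝ)) {u : ℝ} (hu : u ∈ Icc (0:ℝ) 1) :
    ext' b u = b ⟨u, hu⟩ := by
  unfold ext'; congr 1; exact Subtype.ext (clamp_of_mem hu)

noncomputable def Tmap (q : ℝ → ℝ) (hq : Continuous q) :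
    C(↥(Icc (0:ℝ) 1), ℝ) → C(↥(Icc (0:ℝ) 1), ℝ) := fun b =>
  ⟨fun x => 1 - J (fun u => q u * ext' b u) ↑x, by
    apply Continuous.sub continuous_const
    exact (contOn_J (hq.mul (continuous_ext' b))).restrict⟩

lemma Tmap_apply (q : ℝ → ℝ) (hq : Continuous q) (b : C(↥(Icc (0:ℝ) 1), ℝ))
    (x : ↥(Icc (0:ℝ) 1)) : Tmap q hq b x = 1 - J (fun u => q u * ext' b u) ↑x := rfl

lemma J_sub {f h : ℝ → ℝ} (hf : Continuous f) (hh : Continuous h) (s : ℝ) :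
    J f s - J h s = J (fun u => f u - h u) s := by
  unfold J
  have hker : Continuous fun u : ℝ => (u/2 - u^3/(2*s^2)) := by continuity
  rw [← integral_sub (f := fun u => (u/2 - u^3/(2*s^2)) * f u)
      (g := fun u => (u/2 - u^3/(2*s^2)) * h u) ((hker.mul hf).intervalIntegrable _ _)
      ((hker.mul hh).intervalIntegrable _ _)]
  apply integral_congr; intro u _; ring

lemma iter_bound (q : ℝ → ℝ) (hq : Continuous q) {Mq : ℝ}
    (hMq : ∀ u ∈ Icc (0:ℝ) 1, |q u| ≤ Mq)
    (b c : C(↥(Icc (0:ℝ) 1), ℝ)) (n : ℕ) (x : ↥(Icc (0:ℝ) 1)) :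
    |(Tmap q hq)^[n] b x - (Tmap q hq)^[n] c x| ≤
      (Mq/4)^n / n.factorial * (x:ℝ)^(2*n) * dist b c := by
  induction n generalizing x with
  | zero =>
      simp only [Function.iterate_zero_apply, pow_zero, Nat.factorial_zero, Nat.cast_one,
        mul_zero, pow_zero, mul_one, one_mul]
      rw [div_one, one_mul, ← Real.dist_eq]
      exact ContinuousMap.dist_apply_le_dist x
  | succ n ih =>
      set b' := (Tmap q hq)^[n] b with hb'
      set c' := (Tmap q hq)^[n] c with hc'
      rw [Function.iterate_succ_apply', Function.iterate_succ_apply', ← hb', ← hc']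
      rw [Tmap_apply, Tmap_apply]
      have hgb : Continuous fun u => q u * ext' b' u := hq.mul (continuous_ext' b')
      have hgc : Continuous fun u => q u * ext' c' u := hq.mul (continuous_ext' c')
      have heq : (1 - J (fun u => q u * ext' b' u) ↑x) - (1 - J (fun u => q u * ext' c' u) ↑x)
          = J (fun u => q u * ext' c' u - q u * ext' b' u) ↑x := by
        rw [← J_sub hgc hgb]; ring
      rw [heq]
      have hx0 : (0:ℝ) ≤ ↑x := x.2.1
      have hx1 : (x:ℝ) ≤ 1 := x.2.2
      have hMq0 : 0 ≤ Mq := le_trans (abs_nonneg _) (hMq 0 (by norm_num))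
      have hbnd : ∀ u ∈ Icc (0:ℝ) (x:ℝ),
          |q u * ext' c' u - q u * ext' b' u| ≤
            (Mq * ((Mq/4)^n / n.factorial * dist b c)) * u^(2*n) := by
        intro u hu
        have hu1 : u ∈ Icc (0:ℝ) 1 := ⟨hu.1, le_trans hu.2 hx1⟩
        have h1 : |q u * ext' c' u - q u * ext' b' u| = |q u| * |c' (clamp u) - b' (clamp u)| := by
          rw [← abs_mul]; congr 1; unfold ext'; ring
        rw [h1]
        have h2 : |c' (clamp u) - b' (clamp u)| ≤
            (Mq/4)^n / n.factorial * u^(2*n) * dist b c := by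
          have h := ih (clamp u)
          rw [abs_sub_comm] at h
          rwa [clamp_of_mem hu1] at h
        calc |q u| * |c' (clamp u) - b' (clamp u)|
            ≤ Mq * ((Mq/4)^n / n.factorial * u^(2*n) * dist b c) :=
              mul_le_mul (hMq u hu1) h2 (abs_nonneg _) hMq0
          _ = (Mq * ((Mq/4)^n / n.factorial * dist b c)) * u^(2*n) := by ring
      have := J_le (hgc.sub hgb) n hx0 hbnd
      refine le_trans this ?_
      apply le_of_eq
      have hfac : ((n+1 : ℕ).factorial : ℝ) = (n+1) * n.factorial := by
        rw [Nat.factorial_succ]; push_cast; ring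
      have hfac0 : ((n.factorial : ℕ) : ℝ) ≠ 0 := Nat.cast_ne_zero.2 n.factorial_ne_zero
      rw [pow_succ, hfac]
      have h2n : 2*(n+1) = 2*n+2 := by ring
      rw [h2n]
      field_simp
      ring


lemma exists_unique_fixed (q : ℝ → ℝ) (hq : Continuous q) {Mq : ℝ}
    (hMq : ∀ u ∈ Icc (0:ℝ) 1, |q u| ≤ Mq) :
    ∃ b : C(↥(Icc (0:ℝ) 1), ℝ), Tmap q hq b = b ∧
      ∀ c : C(↥(Icc (0:ℝ) 1), ℝ), Tmap q hq c = c → c = b := by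
  have hMq0 : 0 ≤ Mq := le_trans (abs_nonneg _) (hMq 0 (by norm_num))
  -- choose n with (Mq/4)^n/n! < 1
  obtain ⟨n, hn⟩ : ∃ n : ℕ, (Mq/4)^n / n.factorial < 1 := by
    have := FloorSemiring.tendsto_pow_div_factorial_atTop (Mq/4)
    have h1 := this.eventually (eventually_lt_nhds (by norm_num : (0:ℝ) < 1))
    obtain ⟨n, hn⟩ := h1.exists
    exact ⟨n, hn⟩
  set c0 : ℝ := (Mq/4)^n / n.factorial with hc0
  have hc00 : 0 ≤ c0 := by positivity
  set K : NNReal := Real.toNNReal c0 with hK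
  have hKc : (K : ℝ) = c0 := Real.coe_toNNReal _ hc00
  have hlip : LipschitzWith K ((Tmap q hq)^[n]) := by
    apply LipschitzWith.of_dist_le_mul
    intro b c
    rw [hKc]
    rw [ContinuousMap.dist_le (by positivity)]
    intro x
    rw [Real.dist_eq]
    refine le_trans (iter_bound q hq hMq b c n x) ?_
    have hx : (x:ℝ)^(2*n) ≤ 1 := pow_le_one₀ x.2.1 x.2.2
    calc (Mq/4)^n / n.factorial * (x:ℝ)^(2*n) * dist b c
        ≤ (Mq/4)^n / n.factorial * 1 * dist b c := by
          apply mul_le_mul_of_nonneg_right _ dist_nonneg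
          apply mul_le_mul_of_nonneg_left hx (by positivity)
      _ = c0 * dist b c := by rw [mul_one]
  have hcontr : ContractingWith K ((Tmap q hq)^[n]) := by
    constructor
    · have : (K:ℝ) < 1 := by rw [hKc]; exact hn
      exact_mod_cast this
    · exact hlip
  have hfix : Function.IsFixedPt ((Tmap q hq)^[n]) (hcontr.fixedPoint _) :=
    hcontr.fixedPoint_isFixedPt
  set x0 := hcontr.fixedPoint ((Tmap q hq)^[n]) with hx0
  have hTx0 : Tmap q hq x0 = x0 := by
    have h1 : Function.IsFixedPt ((Tmap q hq)^[n]) (Tmap q hq x0) := by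
      unfold Function.IsFixedPt
      rw [← Function.iterate_succ_apply (Tmap q hq) n x0,
        Function.iterate_succ_apply' (Tmap q hq) n x0, hfix]
    exact hcontr.fixedPoint_unique' h1 hfix
  refine ⟨x0, hTx0, ?_⟩
  intro c hc
  exact hcontr.fixedPoint_unique' (Function.IsFixedPt.iterate hc n) hfix


end SLC
end SLCHelpers

section Main
open MeasureTheory intervalIntegral Filter Topology

def IsSingularLinearSol (Q : ℝ → ℝ) (β β₁ β₂ : ℝ → ℝ) : Prop :=
  (∀ s ∈ Icc (0:ℝ) 1, HasDerivWithinAt β (β₁ s) (Icc 0 1) s) ∧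
  (∀ s ∈ Icc (0:ℝ) 1, HasDerivWithinAt β₁ (β₂ s) (Icc 0 1) s) ∧
  ContinuousOn β₂ (Icc 0 1) ∧
  ∀ s ∈ Ioc (0:ℝ) 1, β₂ s + (3 / s) * β₁ s + Q s * β s = 0

/-- For `Q : [0,1] → ℝ` Lipschitz continuous, the singular linear Cauchy
problem `β'' + (3/s) β' + Q β = 0` on `(0, 1]`, `β(0) = 1`, `β'(0) = 0`, has exactly one
`C²([0,1])` solution. -/
theorem singular_linear_cauchy_exists_unique
    (Q : ℝ → ℝ) (hQ : ∃ K, LipschitzOnWith K Q (Icc 0 1)) :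
    ∃ β β₁ β₂ : ℝ → ℝ,
      (IsSingularLinearSol Q β β₁ β₂ ∧ β 0 = 1 ∧ β₁ 0 = 0) ∧
      ∀ θ θ₁ θ₂ : ℝ → ℝ,
        (IsSingularLinearSol Q θ θ₁ θ₂ ∧ θ 0 = 1 ∧ θ₁ 0 = 0) → EqOn θ β (Icc 0 1) := by
  classical
  obtain ⟨Kq, hKq⟩ := hQ
  have hQcont : ContinuousOn Q (Icc 0 1) := hKq.continuousOn
  have h01 : (0:ℝ) ∈ Icc (0:ℝ) 1 := ⟨le_refl 0, zero_le_one⟩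
  set q : ℝ → ℝ := fun u => Q ↑(SLC.clamp u) with hq_def
  have hq : Continuous q := by
    apply hQcont.comp_continuous (continuous_subtype_val.comp SLC.continuous_clamp)
    exact fun u => (SLC.clamp u).2
  have hq_eq : ∀ u ∈ Icc (0:ℝ) 1, q u = Q u := by
    intro u hu; simp only [hq_def]; rw [SLC.clamp_of_mem hu]
  obtain ⟨Mq, hMq⟩ : ∃ Mq, ∀ u ∈ Icc (0:ℝ) 1, |q u| ≤ Mq := by
    obtain ⟨M, hM⟩ :=
      (isCompact_Icc (a := (0:ℝ)) (b := 1)).exists_bound_of_continuousOn hq.continuousOn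
    exact ⟨M, fun u hu => hM u hu⟩
  obtain ⟨bc, hbc, huniq⟩ := SLC.exists_unique_fixed q hq hMq
  set β : ℝ → ℝ := SLC.ext' bc with hβ_def
  have hβcont : Continuous β := SLC.continuous_ext' bc
  set h : ℝ → ℝ := fun u => q u * β u with hh_def
  have hh : Continuous h := hq.mul hβcont
  obtain ⟨Mh, hMh⟩ : ∃ Mh, ∀ u ∈ Icc (0:ℝ) 1, |h u| ≤ Mh := by
    obtain ⟨M, hM⟩ :=
      (isCompact_Icc (a := (0:ℝ)) (b := 1)).exists_bound_of_continuousOn hh.continuousOn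
    exact ⟨M, fun u hu => hM u hu⟩
  have hMh0 : 0 ≤ Mh := le_trans (abs_nonneg _) (hMh 0 h01)
  have hfix : ∀ s : ℝ, ∀ hs : s ∈ Icc (0:ℝ) 1, β s = 1 - SLC.J h s := by
    intro s hs
    have h1 : β s = bc ⟨s, hs⟩ := SLC.ext'_apply_mem bc hs
    rw [h1, ← hbc, SLC.Tmap_apply]
  have hβ0 : β 0 = 1 := by rw [hfix 0 h01, SLC.J_zero]; ring
  set β₁ : ℝ → ℝ := fun s => -(SLC.I3 h s) / s^3 with hβ₁_def
  set β₂ : ℝ → ℝ := fun s =>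
    if s = 0 then -(h 0)/4 else 3 * SLC.I3 h s / s^4 - h s with hβ₂_def
  have hβ₁0 : β₁ 0 = 0 := by simp [hβ₁_def, SLC.I3_zero]
  -- the function F giving β on Icc
  have hFβ : ∀ t ∈ Icc (0:ℝ) 1, β t = 1 - SLC.I1 h t / 2 + SLC.I3 h t / (2*t^2) := by
    intro t ht
    rw [hfix t ht, SLC.J_eq hh]
    ring
  have hE1 : ∀ s ∈ Icc (0:ℝ) 1, HasDerivWithinAt β (β₁ s) (Icc 0 1) s := by
    intro s hs
    rcases eq_or_ne s 0 with rfl | hs0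
    · rw [hβ₁0, hasDerivWithinAt_iff_tendsto_slope]
      apply squeeze_zero_norm' (a := fun t => Mh/4 * t)
      · filter_upwards [self_mem_nhdsWithin] with t ht
        have ht1 : t ∈ Icc (0:ℝ) 1 := ht.1
        have htne : t ≠ 0 := by simpa using ht.2
        have ht0 : 0 < t := lt_of_le_of_ne ht1.1 (Ne.symm htne)
        have hJb : |SLC.J h t| ≤ Mh/4 * t^2 := by
          have := SLC.J_le hh 0 (le_of_lt ht0)
            (fun u hu => by
              simpa using hMh u ⟨hu.1, le_trans hu.2 ht1.2⟩)
          simpa using this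
        have hslope : slope β 0 t = -(SLC.J h t) / t := by
          rw [slope_def_field, hβ0, hfix t ht1]
          ring
        rw [hslope, Real.norm_eq_abs, abs_div, abs_of_pos ht0, abs_neg]
        calc |SLC.J h t| / t ≤ (Mh/4 * t^2)/t := by gcongr
          _ = Mh/4 * t := by field_simp
      · have : Tendsto (fun t : ℝ => Mh/4 * t) (𝓝 0) (𝓝 (Mh/4 * 0)) :=
          (continuous_const.mul continuous_id).tendsto 0
        simpa using this.mono_left nhdsWithin_le_nhds
    · -- s ≠ 0
      have hd1 : HasDerivAt (fun t => SLC.I1 h t / 2) (s * h s / 2) s :=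
        (SLC.hasDerivAt_I1 hh s).div_const 2
      have hd2 := SLC.hasDerivAt_I3_div hh hs0
      have hF : HasDerivAt (fun t => 1 - SLC.I1 h t / 2 + SLC.I3 h t / (2*t^2)) (β₁ s) s := by
        have := ((hasDerivAt_const s (1:ℝ)).sub hd1).add hd2
        refine this.congr_deriv ?_
        rw [hβ₁_def]
        field_simp
        ring
      exact (hF.hasDerivWithinAt).congr (fun t ht => hFβ t ht) (hFβ s hs)
  have hE2 : ∀ s ∈ Icc (0:ℝ) 1, HasDerivWithinAt β₁ (β₂ s) (Icc 0 1) s := by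
    intro s hs
    rcases eq_or_ne s 0 with rfl | hs0
    · have hβ₂0 : β₂ 0 = -(h 0)/4 := by rw [hβ₂_def]; simp
      rw [hβ₂0, hasDerivWithinAt_iff_tendsto_slope]
      have hsub : Icc (0:ℝ) 1 \ {0} ⊆ Ioi 0 := by
        intro t ht
        have htne : t ≠ 0 := by simpa using ht.2
        exact lt_of_le_of_ne ht.1.1 (Ne.symm htne)
      have h1 : Tendsto (fun t => -(SLC.I3 h t / t^4)) (𝓝[Icc (0:ℝ) 1 \ {0}] 0)
          (𝓝 (-(h 0 / 4))) :=
        ((SLC.I3_div_tendsto hh).mono_left (nhdsWithin_mono _ hsub)).neg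
      have h2 : -(h 0 / 4) = -(h 0)/4 := by ring
      rw [← h2]
      apply Tendsto.congr' _ h1
      filter_upwards [self_mem_nhdsWithin] with t ht
      have htne : t ≠ 0 := by simpa using ht.2
      rw [slope_def_field, hβ₁0, hβ₁_def]
      field_simp
      ring
    · have hd3 : HasDerivAt (fun t => -(SLC.I3 h t)) (-(s^3 * h s)) s :=
        (SLC.hasDerivAt_I3 hh s).neg
      have hds : HasDerivAt (fun t : ℝ => t^3) (3*s^2) s := by
        simpa using hasDerivAt_pow 3 s
      have hd4 := hd3.div hds (by positivity)
      have hF : HasDerivAt β₁ (β₂ s) s := by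
        rw [hβ₁_def, hβ₂_def]
        simp only [if_neg hs0]
        refine hd4.congr_deriv ?_
        field_simp
        ring
      exact hF.hasDerivWithinAt
  have hE3 : ContinuousOn β₂ (Icc 0 1) := by
    have hfeq : β₂ = fun t => (if t = 0 then 3 * h 0 / 4 else 3 * SLC.I3 h t / t^4) - h t := by
      funext t
      by_cases ht : t = 0
      · rw [hβ₂_def]; simp [ht]; ring
      · rw [hβ₂_def]; simp [ht]
    rw [hfeq]
    apply ContinuousOn.sub _ hh.continuousOn
    intro s hs
    rcases eq_or_ne s 0 with rfl | hs0
    · rw [← continuousWithinAt_diff_self]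
      unfold ContinuousWithinAt
      simp only [if_pos rfl]
      have hsub : Icc (0:ℝ) 1 \ {0} ⊆ Ioi 0 := by
        intro t ht
        have htne : t ≠ 0 := by simpa using ht.2
        exact lt_of_le_of_ne ht.1.1 (Ne.symm htne)
      have h1 : Tendsto (fun t => 3 * (SLC.I3 h t / t^4)) (𝓝[Icc (0:ℝ) 1 \ {0}] 0)
          (𝓝 (3 * (h 0 / 4))) :=
        ((SLC.I3_div_tendsto hh).mono_left (nhdsWithin_mono _ hsub)).const_mul 3
      have h2 : (3:ℝ) * (h 0 / 4) = 3 * h 0 / 4 := by ring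
      rw [← h2]
      apply Tendsto.congr' _ h1
      filter_upwards [self_mem_nhdsWithin] with t ht
      have htne : t ≠ 0 := by simpa using ht.2
      rw [if_neg htne]
      ring
    · apply ContinuousAt.continuousWithinAt
      have hev : ∀ᶠ t in 𝓝 s, 3 * SLC.I3 h t / t^4 = (if t = 0 then 3 * h 0 / 4
          else 3 * SLC.I3 h t / t^4) := by
        filter_upwards [isOpen_ne.mem_nhds hs0] with t ht
        rw [if_neg ht]
      apply ContinuousAt.congr _ hev
      exact ((((SLC.hasDerivAt_I3 hh s).continuousAt).const_mul 3).div
        ((continuous_pow 4).continuousAt) (pow_ne_zero 4 hs0))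
  have hE4 : ∀ s ∈ Ioc (0:ℝ) 1, β₂ s + (3 / s) * β₁ s + Q s * β s = 0 := by
    intro s hsIoc
    have hs0 : s ≠ 0 := ne_of_gt hsIoc.1
    have hsIcc : s ∈ Icc (0:ℝ) 1 := ⟨le_of_lt hsIoc.1, hsIoc.2⟩
    rw [hβ₂_def, hβ₁_def]
    simp only [if_neg hs0]
    have hhs : h s = Q s * β s := by rw [hh_def]; simp only; rw [hq_eq s hsIcc]
    rw [hhs]
    field_simp
    ring
  refine ⟨β, β₁, β₂, ⟨⟨hE1, hE2, hE3, hE4⟩, hβ0, hβ₁0⟩, ?_⟩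
  rintro θ θ₁ θ₂ ⟨⟨hT1, hT2, hT3, hT4⟩, hθ0, hθ10⟩
  have hθcont : ContinuousOn θ (Icc 0 1) := fun u hu => (hT1 u hu).continuousWithinAt
  have hθ₁cont : ContinuousOn θ₁ (Icc 0 1) := fun u hu => (hT2 u hu).continuousWithinAt
  set θc : C(↥(Icc (0:ℝ) 1), ℝ) := ⟨(Icc (0:ℝ) 1).restrict θ,
    continuousOn_iff_continuous_restrict.1 hθcont⟩ with hθc_def
  have hextθ : ∀ u : ℝ, ∀ hu : u ∈ Icc (0:ℝ) 1, SLC.ext' θc u = θ u := by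
    intro u hu
    rw [SLC.ext'_apply_mem θc hu]
    rfl
  set g : ℝ → ℝ := fun u => q u * SLC.ext' θc u with hg_def
  have hg : Continuous g := hq.mul (SLC.continuous_ext' θc)
  have hg_eq : ∀ u ∈ Icc (0:ℝ) 1, g u = Q u * θ u := by
    intro u hu
    rw [hg_def]
    simp only
    rw [hq_eq u hu, hextθ u hu]
  -- Step B
  have hstepB : ∀ s ∈ Icc (0:ℝ) 1, s^3 * θ₁ s = -(SLC.I3 g s) := by
    intro s hsIcc
    rcases eq_or_ne s 0 with rfl | hs0
    · rw [SLC.I3_zero]; ring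
    have hs0' : 0 < s := lt_of_le_of_ne hsIcc.1 (Ne.symm hs0)
    have hφ : ∀ u ∈ Icc (0:ℝ) 1, HasDerivWithinAt (fun t => t^3 * θ₁ t)
        (-(u^3 * g u)) (Icc 0 1) u := by
      intro u hu
      have hpow : HasDerivWithinAt (fun t : ℝ => t^3) (3*u^2) (Icc 0 1) u := by
        simpa using (hasDerivAt_pow 3 u).hasDerivWithinAt
      have hmul := hpow.mul (hT2 u hu)
      refine hmul.congr_deriv ?_
      rcases eq_or_ne u 0 with rfl | hu0
      · norm_num
      · have hu0' : 0 < u := lt_of_le_of_ne hu.1 (Ne.symm hu0)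
        have hode := hT4 u ⟨hu0', hu.2⟩
        have hθ₂u : θ₂ u = -((3/u) * θ₁ u) - Q u * θ u := by linarith
        rw [hθ₂u, hg_eq u hu]
        field_simp
        ring
    have hsub' : Icc (0:ℝ) s ⊆ Icc (0:ℝ) 1 := Icc_subset_Icc le_rfl hsIcc.2
    have hcontφ : ContinuousOn (fun t => t^3 * θ₁ t) (Icc 0 s) :=
      fun u hu => ((hφ u (hsub' hu)).continuousWithinAt).mono hsub'
    have hderiv : ∀ x ∈ Ioo (0:ℝ) s, HasDerivWithinAt (fun t => t^3 * θ₁ t)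
        (-(x^3 * g x)) (Ioi x) x := by
      intro x hx
      have hxIcc : x ∈ Icc (0:ℝ) 1 := ⟨le_of_lt hx.1, le_trans (le_of_lt hx.2) hsIcc.2⟩
      exact (hφ x hxIcc).mono_of_mem_nhdsWithin
        (Icc_mem_nhdsGT_of_mem ⟨le_of_lt hx.1, lt_of_lt_of_le hx.2 hsIcc.2⟩)
    have hint : IntervalIntegrable (fun u : ℝ => -(u^3 * g u)) volume 0 s :=
      (((continuous_pow 3).mul hg).neg).intervalIntegrable _ _
    have hFTC := intervalIntegral.integral_eq_sub_of_hasDeriv_right_of_le (le_of_lt hs0')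
      hcontφ hderiv hint
    calc s^3 * θ₁ s = s^3 * θ₁ s - 0^3 * θ₁ 0 := by norm_num
      _ = ∫ y in (0:ℝ)..s, -(y^3 * g y) := hFTC.symm
      _ = -(∫ y in (0:ℝ)..s, y^3 * g y) := intervalIntegral.integral_neg
      _ = -(SLC.I3 g s) := rfl
  have hθ₁eq : ∀ s ∈ Icc (0:ℝ) 1, θ₁ s = -(SLC.I3 g s) / s^3 := by
    intro s hsIcc
    rcases eq_or_ne s 0 with rfl | hs0
    · simp [hθ10, SLC.I3_zero]
    · rw [eq_div_iff (pow_ne_zero 3 hs0)]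
      have := hstepB s hsIcc
      linarith [this]
  -- Step C
  have hθeq : ∀ s ∈ Icc (0:ℝ) 1, θ s = 1 + ∫ u in (0:ℝ)..s, θ₁ u := by
    intro s hsIcc
    rcases eq_or_ne s 0 with rfl | hs0
    · simp [hθ0]
    have hs0' : 0 < s := lt_of_le_of_ne hsIcc.1 (Ne.symm hs0)
    have hsub' : Icc (0:ℝ) s ⊆ Icc (0:ℝ) 1 := Icc_subset_Icc le_rfl hsIcc.2
    have hderiv : ∀ x ∈ Ioo (0:ℝ) s, HasDerivWithinAt θ (θ₁ x) (Ioi x) x := by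
      intro x hx
      have hxIcc : x ∈ Icc (0:ℝ) 1 := ⟨le_of_lt hx.1, le_trans (le_of_lt hx.2) hsIcc.2⟩
      exact (hT1 x hxIcc).mono_of_mem_nhdsWithin
        (Icc_mem_nhdsGT_of_mem ⟨le_of_lt hx.1, lt_of_lt_of_le hx.2 hsIcc.2⟩)
    have hint : IntervalIntegrable θ₁ volume 0 s := by
      apply ContinuousOn.intervalIntegrable
      rw [uIcc_of_le (le_of_lt hs0')]
      exact hθ₁cont.mono hsub'
    have hFTC := intervalIntegral.integral_eq_sub_of_hasDeriv_right_of_le (le_of_lt hs0')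
      (hθcont.mono hsub') hderiv hint
    rw [hFTC, hθ0]
    ring
  -- Step D
  have hJθ : ∀ s : ℝ, ∀ hs : s ∈ Icc (0:ℝ) 1, θ s = 1 - SLC.J g s := by
    intro s hsIcc
    rcases eq_or_ne s 0 with rfl | hs0
    · rw [SLC.J_zero, hθ0]; ring
    have hs0' : 0 < s := lt_of_le_of_ne hsIcc.1 (Ne.symm hs0)
    set P : ℝ → ℝ := fun t => ∫ u in (0:ℝ)..t, θ₁ u with hP_def
    have hPcont : ContinuousOn P (Icc (0:ℝ) 1) := by
      have hIO : IntegrableOn θ₁ (Icc (0:ℝ) 1) := hθ₁cont.integrableOn_Icc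
      have := intervalIntegral.continuousOn_primitive_interval
        (a := (0:ℝ)) (b := (1:ℝ)) (μ := volume) (f := θ₁)
        (by rwa [uIcc_of_le zero_le_one])
      rwa [uIcc_of_le zero_le_one] at this
    set Ψ : ℝ → ℝ := fun t => P t + SLC.I1 g t / 2 - SLC.I3 g t / (2*t^2) with hΨ_def
    have hI1cont : Continuous (SLC.I1 g) :=
      continuous_iff_continuousAt.2 fun x => (SLC.hasDerivAt_I1 hg x).continuousAt
    have hΨconst : ∀ a ∈ Ioc (0:ℝ) s, Ψ s = Ψ a := by
      intro a ha
      have hcont : ContinuousOn Ψ (Icc a s) := by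
        apply ContinuousOn.sub
        · apply ContinuousOn.add
          · exact hPcont.mono (Icc_subset_Icc (le_of_lt ha.1) hsIcc.2)
          · exact (hI1cont.continuousOn).div_const 2
        · intro t ht
          have ht0 : t ≠ 0 := ne_of_gt (lt_of_lt_of_le ha.1 ht.1)
          exact (((SLC.hasDerivAt_I3 hg t).continuousAt).div
            ((continuous_const.mul (continuous_pow 2)).continuousAt)
            (by show (2:ℝ) * t^2 ≠ 0; positivity)).continuousWithinAt
      have hderiv : ∀ x ∈ Ico a s, HasDerivWithinAt Ψ 0 (Ici x) x := by
        intro x hx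
        have hx0 : 0 < x := lt_of_lt_of_le ha.1 hx.1
        have hx1 : x < 1 := lt_of_lt_of_le hx.2 hsIcc.2
        have hxIcc : x ∈ Icc (0:ℝ) 1 := ⟨le_of_lt hx0, le_of_lt hx1⟩
        have dP : HasDerivAt P (θ₁ x) x := by
          apply intervalIntegral.integral_hasDerivAt_right
          · apply ContinuousOn.intervalIntegrable
            rw [uIcc_of_le (le_of_lt hx0)]
            exact hθ₁cont.mono (Icc_subset_Icc le_rfl (le_of_lt hx1))
          · exact (hθ₁cont.mono Ioo_subset_Icc_self).stronglyMeasurableAtFilter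
              isOpen_Ioo x ⟨hx0, hx1⟩
          · exact hθ₁cont.continuousAt (Icc_mem_nhds hx0 hx1)
        have dI1 : HasDerivAt (fun t => SLC.I1 g t / 2) (x * g x / 2) x :=
          (SLC.hasDerivAt_I1 hg x).div_const 2
        have dI3 := SLC.hasDerivAt_I3_div hg (ne_of_gt hx0)
        have hsum := (dP.add dI1).sub dI3
        have hval : θ₁ x + x * g x / 2 - (x * g x / 2 - SLC.I3 g x / x^3) = 0 := by
          rw [hθ₁eq x hxIcc]
          ring
        rw [hval] at hsum
        exact hsum.hasDerivWithinAt
      have := constant_of_has_deriv_right_zero hcont hderiv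
      exact this s (right_mem_Icc.2 ha.2)
    have hΨ0 : Tendsto Ψ (𝓝[Ioc (0:ℝ) 1] 0) (𝓝 0) := by
      have hmono : 𝓝[Ioc (0:ℝ) 1] 0 ≤ 𝓝[Icc (0:ℝ) 1] 0 :=
        nhdsWithin_mono _ Ioc_subset_Icc_self
      have hP0 : Tendsto P (𝓝[Ioc (0:ℝ) 1] 0) (𝓝 0) := by
        have := (hPcont 0 h01).mono_left hmono
        simpa [hP_def] using this
      have hI10 : Tendsto (fun t => SLC.I1 g t / 2) (𝓝[Ioc (0:ℝ) 1] 0) (𝓝 0) := by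
        have : Tendsto (fun t => SLC.I1 g t / 2) (𝓝 0) (𝓝 (SLC.I1 g 0 / 2)) :=
          (hI1cont.tendsto 0).div_const 2
        rw [SLC.I1_zero] at this
        norm_num at this
        exact this.mono_left (hmono.trans nhdsWithin_le_nhds)
      have hI30 : Tendsto (fun t => SLC.I3 g t / (2*t^2)) (𝓝[Ioc (0:ℝ) 1] 0) (𝓝 0) :=
        (SLC.I3_div_sq_tendsto hg).mono_left hmono
      have := (hP0.add hI10).sub hI30
      simpa using this
    rw [nhdsWithin_Ioc_eq_nhdsGT zero_lt_one] at hΨ0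
    have hconst_ev : Ψ =ᶠ[𝓝[>] (0:ℝ)] fun _ => Ψ s := by
      have hmem : Ioc (0:ℝ) s ∈ 𝓝[>] (0:ℝ) := by
        apply mem_nhdsWithin.2
        exact ⟨Iio s, isOpen_Iio, hs0', fun t ht => ⟨ht.2, le_of_lt ht.1⟩⟩
      filter_upwards [hmem] with a ha
      exact (hΨconst a ha).symm
    have hΨs : Ψ s = 0 :=
      tendsto_nhds_unique (tendsto_const_nhds.congr' hconst_ev.symm) hΨ0
    have hPs : P s = -(SLC.I1 g s / 2) + SLC.I3 g s / (2*s^2) := by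
      have : Ψ s = P s + SLC.I1 g s / 2 - SLC.I3 g s / (2*s^2) := rfl
      rw [this] at hΨs
      linarith
    rw [hθeq s hsIcc, SLC.J_eq hg]
    have : (∫ u in (0:ℝ)..s, θ₁ u) = P s := rfl
    rw [this, hPs]
    ring
  -- conclude
  have hTθ : SLC.Tmap q hq θc = θc := by
    apply ContinuousMap.ext
    intro x
    rw [SLC.Tmap_apply]
    have h1 : θc x = θ ↑x := rfl
    rw [h1]
    exact (hJθ ↑x x.2).symm
  have hθbc : θc = bc := huniq θc hTθ
  intro s hs
  have h1 : θ s = θc ⟨s, hs⟩ := rfl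
  rw [h1, hθbc]
  exact (SLC.ext'_apply_mem bc hs).symm


end Main
end

section
/- Let Q : [0, 1] → ℝ be Lipschitz continuous and let β ∈ C²([0, 1]) be the unique solution of β″(s) + (3/s)β′(s) + Q(s)β(s) = 0 on (0, 1] with β(0) = 1, β′(0) = 0. Then every θ ∈ C²([0, 1]) satisfying θ″(s) + (3/s)θ′(s) + Q(s)θ(s) = 0 for all s ∈ (0, 1] and θ′(0) = 0 is a scalar multiple of β; more precisely, θ = θ(0) · β. -/
/-!
The difference `w = θ - θ(0) β` solves the same equation with `w(0) = 0`. In divergence form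
the equation reads `(s³ w')' = -s³ Q w`, so `s³ w'(s) = -∫₀ˢ t³ Q w`, which gives
`|w'(s)| ≤ M ∫₀ˢ |w|` with `M = sup |Q|`. Integrating once more, `|w(s)| ≤ M ∫₀ˢ |w|`, and
Grönwall's inequality for `s ↦ ∫₀ˢ |w|` forces `w = 0`.
-/

open Set

open intervalIntegral

section Calculus

variable {E : Type*} [NormedAddCommGroup E] {f f' : ℝ → E} {a b : ℝ}

theorem integral_eq_sub_of_hasDerivWithinAt_Icc [NormedSpace ℝ E] [CompleteSpace E]
    (hf : ∀ x ∈ Icc a b, HasDerivWithinAt f (f' x) (Icc a b) x)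
    (hf' : ContinuousOn f' (Icc a b)) :
    ∀ s ∈ Icc a b, ∫ x in a..s, f' x = f s - f a := by
  intro s hs
  have hsub : Icc a s ⊆ Icc a b := Icc_subset_Icc le_rfl hs.2
  refine integral_eq_sub_of_hasDeriv_right_of_le hs.1
    (fun x hx => (hf x (hsub hx)).continuousWithinAt.mono hsub) (fun x hx => ?_)
    ((hf'.mono hsub).intervalIntegrable_of_Icc hs.1)
  exact ((hf x ⟨hx.1.le, hx.2.le.trans hs.2⟩).hasDerivAt
    (Icc_mem_nhds hx.1 (hx.2.trans_le hs.2))).hasDerivWithinAt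

theorem ContinuousOn.hasDerivWithinAt_integral_Icc [NormedSpace ℝ E] [CompleteSpace E]
    (hf : ContinuousOn f (Icc a b)) {x : ℝ} (hx : x ∈ Icc a b) :
    HasDerivWithinAt (fun u => ∫ t in a..u, f t) (f x) (Icc a b) x := by
  have : Fact (x ∈ Icc a b) := ⟨hx⟩
  exact integral_hasDerivWithinAt_right
    ((hf.mono (uIcc_subset_Icc (left_mem_Icc.2 (hx.1.trans hx.2)) hx)).intervalIntegrable)
    (hf.stronglyMeasurableAtFilter_nhdsWithin measurableSet_Icc x) (hf x hx)

theorem eq_zero_of_norm_le_mul_integral_norm {K : ℝ} (hf : ContinuousOn f (Icc a b))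
    (hbound : ∀ x ∈ Icc a b, ‖f x‖ ≤ K * ∫ t in a..x, ‖f t‖) :
    ∀ x ∈ Icc a b, f x = 0 := by
  set F : ℝ → ℝ := fun x => ∫ t in a..x, ‖f t‖
  have hnorm : ContinuousOn (fun t => ‖f t‖) (Icc a b) := hf.norm
  have hF_nonneg : ∀ x ∈ Icc a b, 0 ≤ F x := fun x hx =>
    integral_nonneg hx.1 fun t _ => norm_nonneg _
  have hF_zero : ∀ x ∈ Icc a b, F x = 0 := by
    refine eq_zero_of_abs_deriv_le_mul_abs_self_of_eq_zero_right (K := K)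
      (fun x hx => (hnorm.hasDerivWithinAt_integral_Icc hx).continuousWithinAt)
      (fun x hx => (hnorm.hasDerivWithinAt_integral_Icc (Ico_subset_Icc_self hx)
        ).mono_of_mem_nhdsWithin (Icc_mem_nhdsGE_of_mem hx)) integral_same fun x hx => ?_
    have hx' := Ico_subset_Icc_self hx
    rw [Real.norm_eq_abs, abs_norm, Real.norm_eq_abs, abs_of_nonneg (hF_nonneg x hx')]
    exact hbound x hx'
  intro x hx
  simpa [F, hF_zero x hx] using hbound x hx

end Calculus

namespace IsSingularLinearSol

variable {Q w w₁ w₂ v v₁ v₂ : ℝ → ℝ}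

theorem sub (hw : IsSingularLinearSol Q w w₁ w₂) (hv : IsSingularLinearSol Q v v₁ v₂) :
    IsSingularLinearSol Q (w - v) (w₁ - v₁) (w₂ - v₂) := by
  obtain ⟨hwd, hw₁d, hw₂c, hw_ode⟩ := hw
  obtain ⟨hvd, hv₁d, hv₂c, hv_ode⟩ := hv
  refine ⟨fun s hs => (hwd s hs).sub (hvd s hs), fun s hs => (hw₁d s hs).sub (hv₁d s hs),
    hw₂c.sub hv₂c, fun s hs => ?_⟩
  simp only [Pi.sub_apply]
  linear_combination hw_ode s hs - hv_ode s hs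

theorem const_mul (hw : IsSingularLinearSol Q w w₁ w₂) (c : ℝ) :
    IsSingularLinearSol Q (fun s => c * w s) (fun s => c * w₁ s) (fun s => c * w₂ s) := by
  obtain ⟨hwd, hw₁d, hw₂c, hw_ode⟩ := hw
  refine ⟨fun s hs => (hwd s hs).const_mul c, fun s hs => (hw₁d s hs).const_mul c,
    hw₂c.const_smul c, fun s hs => ?_⟩
  linear_combination c * hw_ode s hs

theorem continuousOn (hw : IsSingularLinearSol Q w w₁ w₂) : ContinuousOn w (Icc 0 1) :=
  fun s hs => (hw.1 s hs).continuousWithinAt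

theorem continuousOn_deriv (hw : IsSingularLinearSol Q w w₁ w₂) : ContinuousOn w₁ (Icc 0 1) :=
  fun s hs => (hw.2.1 s hs).continuousWithinAt

theorem hasDerivWithinAt_cube_mul_deriv (hw : IsSingularLinearSol Q w w₁ w₂) {s : ℝ}
    (hs : s ∈ Icc (0:ℝ) 1) :
    HasDerivWithinAt (fun t => t ^ 3 * w₁ t) (-(s ^ 3 * Q s * w s)) (Icc 0 1) s := by
  refine ((hasDerivAt_pow 3 s).hasDerivWithinAt.fun_mul (hw.2.1 s hs)).congr_deriv ?_
  rcases hs.1.eq_or_lt with rfl | hs_pos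
  · simp
  · have h := hw.2.2.2 s ⟨hs_pos, hs.2⟩
    field_simp at h
    linear_combination s ^ 2 * h

theorem cube_mul_deriv_eq_integral (hQ : ContinuousOn Q (Icc 0 1))
    (hw : IsSingularLinearSol Q w w₁ w₂) {s : ℝ} (hs : s ∈ Icc (0:ℝ) 1) :
    s ^ 3 * w₁ s = -∫ t in (0:ℝ)..s, t ^ 3 * Q t * w t := by
  have hcont : ContinuousOn (fun t => -(t ^ 3 * Q t * w t)) (Icc 0 1) :=
    (((continuousOn_pow 3).mul hQ).mul hw.continuousOn).neg
  have h := integral_eq_sub_of_hasDerivWithinAt_Icc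
    (fun t ht => hw.hasDerivWithinAt_cube_mul_deriv ht) hcont s hs
  rw [integral_neg, zero_pow three_ne_zero, zero_mul, sub_zero] at h
  exact h.symm

theorem abs_deriv_le_mul_integral_abs {M : ℝ} (hQ : ContinuousOn Q (Icc 0 1))
    (hM : ∀ t ∈ Icc (0:ℝ) 1, |Q t| ≤ M) (hw : IsSingularLinearSol Q w w₁ w₂) {s : ℝ}
    (hs : s ∈ Ioc (0:ℝ) 1) :
    |w₁ s| ≤ M * ∫ t in (0:ℝ)..s, |w t| := by
  have hsub : Icc 0 s ⊆ Icc (0:ℝ) 1 := Icc_subset_Icc le_rfl hs.2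
  have hint : IntervalIntegrable (fun t => s ^ 3 * M * |w t|) MeasureTheory.volume 0 s :=
    ((hw.continuousOn.mono hsub).abs.intervalIntegrable_of_Icc hs.1.le).const_mul _
  have hcube : s ^ 3 * |w₁ s| ≤ s ^ 3 * (M * ∫ t in (0:ℝ)..s, |w t|) :=
    calc s ^ 3 * |w₁ s| = |∫ t in (0:ℝ)..s, t ^ 3 * Q t * w t| := by
          rw [← abs_of_pos (pow_pos hs.1 3), ← abs_mul,
            hw.cube_mul_deriv_eq_integral hQ (Ioc_subset_Icc_self hs), abs_neg]
      _ ≤ ∫ t in (0:ℝ)..s, s ^ 3 * M * |w t| := by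
          rw [← Real.norm_eq_abs]
          refine norm_integral_le_of_norm_le hs.1.le (MeasureTheory.ae_of_all _ fun t ht => ?_) hint
          rw [Real.norm_eq_abs, abs_mul, abs_mul, abs_of_nonneg (pow_nonneg ht.1.le 3)]
          gcongr
          · exact pow_nonneg hs.1.le 3
          · exact ht.1.le
          · exact ht.2
          · exact hM t (hsub (Ioc_subset_Icc_self ht))
      _ = s ^ 3 * (M * ∫ t in (0:ℝ)..s, |w t|) := by
          rw [integral_const_mul]
          ring
  exact le_of_mul_le_mul_left hcube (pow_pos hs.1 3)

theorem abs_le_mul_integral_abs {M : ℝ} (hQ : ContinuousOn Q (Icc 0 1))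
    (hM : ∀ t ∈ Icc (0:ℝ) 1, |Q t| ≤ M) (hw : IsSingularLinearSol Q w w₁ w₂) (h0 : w 0 = 0)
    {s : ℝ} (hs : s ∈ Icc (0:ℝ) 1) :
    |w s| ≤ M * ∫ t in (0:ℝ)..s, |w t| := by
  have hM0 : 0 ≤ M := (abs_nonneg _).trans (hM 0 (left_mem_Icc.2 zero_le_one))
  have hint : IntervalIntegrable (fun t => |w t|) MeasureTheory.volume 0 s :=
    (hw.continuousOn.mono (Icc_subset_Icc le_rfl hs.2)).abs.intervalIntegrable_of_Icc hs.1
  have hderiv : ∀ t ∈ uIoc 0 s, ‖w₁ t‖ ≤ M * ∫ u in (0:ℝ)..s, |w u| := by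
    intro t ht
    rw [uIoc_of_le hs.1] at ht
    refine (hw.abs_deriv_le_mul_integral_abs hQ hM ⟨ht.1, ht.2.trans hs.2⟩).trans ?_
    gcongr
    exact integral_mono_interval le_rfl ht.1.le ht.2
      (MeasureTheory.ae_of_all _ fun u => abs_nonneg (w u)) hint
  calc |w s| = ‖∫ t in (0:ℝ)..s, w₁ t‖ := by
        rw [integral_eq_sub_of_hasDerivWithinAt_Icc hw.1 hw.continuousOn_deriv s hs, h0, sub_zero,
          Real.norm_eq_abs]
    _ ≤ (M * ∫ t in (0:ℝ)..s, |w t|) * |s - 0| := norm_integral_le_of_norm_le_const hderiv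
    _ ≤ M * ∫ t in (0:ℝ)..s, |w t| := by
        refine mul_le_of_le_one_right ?_ ?_
        · exact mul_nonneg hM0 (integral_nonneg hs.1 fun u _ => abs_nonneg (w u))
        · rw [sub_zero, abs_of_nonneg hs.1]
          exact hs.2

theorem eq_zero_of_apply_zero (hQ : ContinuousOn Q (Icc 0 1))
    (hw : IsSingularLinearSol Q w w₁ w₂) (h0 : w 0 = 0) : ∀ s ∈ Icc (0:ℝ) 1, w s = 0 := by
  obtain ⟨M, hM⟩ := isCompact_Icc.exists_bound_of_continuousOn hQ
  simp only [Real.norm_eq_abs] at hM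
  exact eq_zero_of_norm_le_mul_integral_norm hw.continuousOn
    fun s hs => hw.abs_le_mul_integral_abs hQ hM h0 hs

end IsSingularLinearSol

theorem regular_solutions_one_dimensional_general
    (Q : ℝ → ℝ) (hQ : ∃ K, LipschitzOnWith K Q (Icc 0 1))
    (β β₁ β₂ : ℝ → ℝ) (hβ : IsSingularLinearSol Q β β₁ β₂)
    (hβ0 : β 0 = 1)
    (θ θ₁ θ₂ : ℝ → ℝ) (hθ : IsSingularLinearSol Q θ θ₁ θ₂) :
    ∀ s ∈ Icc (0:ℝ) 1, θ s = θ 0 * β s := by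
  obtain ⟨K, hK⟩ := hQ
  intro s hs
  have hdiff := (hθ.sub (hβ.const_mul (θ 0))).eq_zero_of_apply_zero hK.continuousOn
    (by simp [hβ0]) s hs
  exact sub_eq_zero.1 hdiff

/-- Let `Q : [0,1] → ℝ` be Lipschitz and `β` the normalized regular solution
(`β(0) = 1`, `β'(0) = 0`) of `β'' + (3/s) β' + Q β = 0` on `(0, 1]`. Then any `C²([0,1])`
solution `θ` of the same ODE with `θ'(0) = 0` satisfies `θ = θ(0) · β` on `[0, 1]`. -/
theorem regular_solutions_one_dimensional
    (Q : ℝ → ℝ) (hQ : ∃ K, LipschitzOnWith K Q (Icc 0 1))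
    (β β₁ β₂ : ℝ → ℝ) (hβ : IsSingularLinearSol Q β β₁ β₂)
    (hβ0 : β 0 = 1) (hβ₁0 : β₁ 0 = 0)
    (θ θ₁ θ₂ : ℝ → ℝ) (hθ : IsSingularLinearSol Q θ θ₁ θ₂) (hθ₁0 : θ₁ 0 = 0) :
    ∀ s ∈ Icc (0:ℝ) 1, θ s = θ 0 * β s :=
  regular_solutions_one_dimensional_general Q hQ β β₁ β₂ hβ hβ0 θ θ₁ θ₂ hθ
end

section
/- Let Q : [0, 1] → ℝ be Lipschitz continuous and let β ∈ C²([0, 1]) be the unique solution of β″(s) + (3/s)β′(s) + Q(s)β(s) = 0 on (0, 1] with β(0) = 1, β′(0) = 0, and assume β(1) ≠ 0. Then every θ ∈ C²([0, 1]) satisfying θ″(s) + (3/s)θ′(s) + Q(s)θ(s) = 0 for all s ∈ (0, 1], θ′(0) = 0, and θ(1) = 0 vanishes identically. -/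
open Set

/-- Let `Q : [0,1] → ℝ` be Lipschitz and `β` the normalized regular solution
(`β(0) = 1`, `β'(0) = 0`) of `β'' + (3/s) β' + Q β = 0` on `(0, 1]` with `β(1) ≠ 0`. Then any
`C²([0,1])` solution `θ` of the same ODE with `θ'(0) = 0` and `θ(1) = 0` vanishes identically
on `[0, 1]`. -/
theorem regular_solution_vanishing_at_one_is_zero
    (Q : ℝ → ℝ) (hQ : ∃ K, LipschitzOnWith K Q (Icc 0 1))
    (β β₁ β₂ : ℝ → ℝ) (hβ : IsSingularLinearSol Q β β₁ β₂)
    (hβ0 : β 0 = 1) (hβ₁0 : β₁ 0 = 0) (hβ1 : β 1 ≠ 0)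
    (θ θ₁ θ₂ : ℝ → ℝ) (hθ : IsSingularLinearSol Q θ θ₁ θ₂)
    (hθ₁0 : θ₁ 0 = 0) (hθ1 : θ 1 = 0) :
    ∀ s ∈ Icc (0:ℝ) 1, θ s = 0 := by
  obtain ⟨K, hQK⟩ := hQ
  obtain ⟨hβd, hβ₁d, hβ₂c, hβode⟩ := hβ
  obtain ⟨hθd, hθ₁d, hθ₂c, hθode⟩ := hθ
  have h01 : (0:ℝ) ∈ Icc (0:ℝ) 1 := ⟨le_refl 0, zero_le_one⟩
  have h11 : (1:ℝ) ∈ Icc (0:ℝ) 1 := ⟨zero_le_one, le_refl 1⟩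
  have hβc : ContinuousOn β (Icc 0 1) := fun s hs => (hβd s hs).continuousWithinAt
  have hβ₁c : ContinuousOn β₁ (Icc 0 1) := fun s hs => (hβ₁d s hs).continuousWithinAt
  have hθc : ContinuousOn θ (Icc 0 1) := fun s hs => (hθd s hs).continuousWithinAt
  have hθ₁c : ContinuousOn θ₁ (Icc 0 1) := fun s hs => (hθ₁d s hs).continuousWithinAt
  -- the Wronskian
  set W : ℝ → ℝ := fun s => β s * θ₁ s - θ s * β₁ s with hWdef
  set g : ℝ → ℝ := fun s => s ^ 3 * W s with hgdef
  have hWd : ∀ s ∈ Icc (0:ℝ) 1,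
      HasDerivWithinAt W (β s * θ₂ s - θ s * β₂ s) (Icc 0 1) s := by
    intro s hs
    have h := ((hβd s hs).mul (hθ₁d s hs)).sub ((hθd s hs).mul (hβ₁d s hs))
    refine h.congr_deriv (Eq.symm ?_)
    ring
  have hgd : ∀ s ∈ Icc (0:ℝ) 1, HasDerivWithinAt g 0 (Icc 0 1) s := by
    intro s hs
    have hp : HasDerivWithinAt (fun s : ℝ => s ^ 3) (3 * s ^ 2) (Icc 0 1) s := by
      simpa using (hasDerivAt_pow 3 s).hasDerivWithinAt
    have h := hp.mul (hWd s hs)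
    refine h.congr_deriv (Eq.symm ?_)
    rcases eq_or_lt_of_le hs.1 with h0 | h0
    · simp [← h0, hβ₁0, hθ₁0, hWdef]
    · have hode1 := hβode s ⟨h0, hs.2⟩
      have hode2 := hθode s ⟨h0, hs.2⟩
      have hβ2 : β₂ s = -((3 / s) * β₁ s + Q s * β s) := by linarith
      have hθ2 : θ₂ s = -((3 / s) * θ₁ s + Q s * θ s) := by linarith
      have hsne : s ≠ 0 := ne_of_gt h0
      rw [hβ2, hθ2]
      field_simp
      ring
  have hgzero : ∀ s ∈ Icc (0:ℝ) 1, g s = 0 := by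
    have hgc : ContinuousOn g (Icc 0 1) := fun s hs => (hgd s hs).continuousWithinAt
    have h := constant_of_has_deriv_right_zero hgc (fun x hx =>
      ((hgd x (Ico_subset_Icc_self hx)).mono (Icc_subset_Icc_left hx.1)).mono_of_mem_nhdsWithin
        (Icc_mem_nhdsGE_of_mem ⟨le_refl x, hx.2⟩))
    intro s hs
    have := h s hs
    simpa [hgdef] using this
  have hW0 : ∀ s ∈ Icc (0:ℝ) 1, W s = 0 := by
    intro s hs
    rcases eq_or_lt_of_le hs.1 with h0 | h0
    · simp [hWdef, ← h0, hβ₁0, hθ₁0]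
    · have := hgzero s hs
      have hs3 : s ^ 3 ≠ 0 := pow_ne_zero _ (ne_of_gt h0)
      exact (mul_eq_zero.mp this).resolve_left hs3
  -- positivity of β near 0
  set c : ℝ := θ 0 with hcdef
  have hβcont0 : ContinuousWithinAt β (Icc 0 1) 0 := hβc 0 h01
  have hev : ∀ᶠ s in nhdsWithin 0 (Icc (0:ℝ) 1), β s ≠ 0 := by
    have : ∀ᶠ s in nhdsWithin 0 (Icc (0:ℝ) 1), β s ∈ Ioi (0:ℝ) := by
      apply hβcont0.eventually_mem
      rw [hβ0]
      exact Ioi_mem_nhds one_pos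
    exact this.mono fun s hs => ne_of_gt hs
  obtain ⟨ε, hεpos, hε⟩ := Metric.mem_nhdsWithin_iff.mp hev
  set δ : ℝ := min (ε / 2) 1 with hδdef
  have hδpos : 0 < δ := lt_min (by linarith) one_pos
  have hδle1 : δ ≤ 1 := min_le_right _ _
  have hδsub : Icc (0:ℝ) δ ⊆ Icc 0 1 := Icc_subset_Icc_right hδle1
  have hβne : ∀ s ∈ Icc (0:ℝ) δ, β s ≠ 0 := by
    intro s hs
    apply hε
    refine ⟨?_, hδsub hs⟩
    rw [Metric.mem_ball, Real.dist_eq, sub_zero, abs_of_nonneg hs.1]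
    calc s ≤ δ := hs.2
      _ ≤ ε / 2 := min_le_left _ _
      _ < ε := by linarith
  -- θ = c β on [0, δ]
  have hθeq : ∀ s ∈ Icc (0:ℝ) δ, θ s = c * β s := by
    set r : ℝ → ℝ := fun s => θ s / β s with hrdef
    have hrd : ∀ s ∈ Icc (0:ℝ) δ, HasDerivWithinAt r 0 (Icc 0 δ) s := by
      intro s hs
      have h := ((hθd s (hδsub hs)).mono hδsub).div ((hβd s (hδsub hs)).mono hδsub)
        (hβne s hs)
      refine h.congr_deriv (Eq.symm ?_)
      have : W s = 0 := hW0 s (hδsub hs)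
      have hWs : β s * θ₁ s - θ s * β₁ s = 0 := this
      rw [eq_comm, div_eq_zero_iff]
      left
      linarith
    have hrc : ContinuousOn r (Icc 0 δ) := fun s hs => (hrd s hs).continuousWithinAt
    have h := constant_of_has_deriv_right_zero hrc (fun x hx =>
      ((hrd x (Ico_subset_Icc_self hx)).mono (Icc_subset_Icc_left hx.1)).mono_of_mem_nhdsWithin
        (Icc_mem_nhdsGE_of_mem ⟨le_refl x, hx.2⟩))
    intro s hs
    have hrs := h s hs
    have : θ s / β s = θ 0 / β 0 := hrs
    rw [hβ0, div_one] at this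
    have := div_eq_iff (hβne s hs) |>.mp this
    rw [this, hcdef]
  -- θ₁ δ = c * β₁ δ
  have hδmem : δ ∈ Icc (0:ℝ) 1 := ⟨le_of_lt hδpos, hδle1⟩
  have hθ₁δ : θ₁ δ = c * β₁ δ := by
    have hu : UniqueDiffWithinAt ℝ (Icc (0:ℝ) δ) δ :=
      uniqueDiffOn_Icc hδpos δ (right_mem_Icc.mpr (le_of_lt hδpos))
    have h1 : HasDerivWithinAt θ (θ₁ δ) (Icc 0 δ) δ := (hθd δ hδmem).mono hδsub
    have h2 : HasDerivWithinAt θ (c * β₁ δ) (Icc 0 δ) δ := by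
      have := ((hβd δ hδmem).mono hδsub).const_mul c
      exact this.congr (fun x hx => (hθeq x hx)) (hθeq δ (right_mem_Icc.mpr (le_of_lt hδpos)))
    exact hu.eq_deriv _ h1 h2
  -- ODE uniqueness on [δ, 1]
  obtain ⟨M, hM⟩ := isCompact_Icc.exists_bound_of_continuousOn hQK.continuousOn
  have hMnn : 0 ≤ M := le_trans (norm_nonneg _) (hM 0 h01)
  set q : ℝ → ℝ := fun t => Q (max 0 (min t 1)) with hqdef
  have hqbound : ∀ t, |q t| ≤ M := by
    intro t
    apply hM
    constructor
    · exact le_max_left _ _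
    · exact max_le zero_le_one (min_le_right _ _)
  set b : ℝ → ℝ := fun t => 3 / max δ t with hbdef
  have hbbound : ∀ t, |b t| ≤ 3 / δ := by
    intro t
    have h1 : 0 < max δ t := lt_of_lt_of_le hδpos (le_max_left _ _)
    rw [abs_of_nonneg (by positivity)]
    apply div_le_div_of_nonneg_left (by norm_num) hδpos (le_max_left _ _)
  set v : ℝ → ℝ × ℝ → ℝ × ℝ := fun t p => (p.2, -(b t) * p.2 - q t * p.1) with hvdef
  have hKnn : 0 ≤ 1 + 3 / δ + M := by positivity
  have hlip : ∀ t, LipschitzWith ⟨1 + 3 / δ + M, hKnn⟩ (v t) := by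
    intro t
    apply LipschitzWith.of_dist_le_mul
    intro p p'
    rw [Prod.dist_eq]
    have hd1 : dist p.1 p'.1 ≤ dist p p' := le_max_left _ _
    have hd2 : dist p.2 p'.2 ≤ dist p p' := le_max_right _ _
    have hdnn : 0 ≤ dist p p' := dist_nonneg
    have h3δ : 0 ≤ 3 / δ := by positivity
    apply max_le
    · calc dist p.2 p'.2 ≤ dist p p' := hd2
        _ ≤ (1 + 3 / δ + M) * dist p p' := by nlinarith
    · rw [Real.dist_eq]
      have : (-(b t) * p.2 - q t * p.1) - (-(b t) * p'.2 - q t * p'.1)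
          = -(b t) * (p.2 - p'.2) - q t * (p.1 - p'.1) := by ring
      rw [this]
      calc |(-(b t)) * (p.2 - p'.2) - q t * (p.1 - p'.1)|
          ≤ |(-(b t)) * (p.2 - p'.2)| + |q t * (p.1 - p'.1)| := abs_sub _ _
        _ = |b t| * |p.2 - p'.2| + |q t| * |p.1 - p'.1| := by
            rw [abs_mul, abs_mul, abs_neg]
        _ ≤ (3 / δ) * dist p p' + M * dist p p' := by
            have e2 : |p.2 - p'.2| = dist p.2 p'.2 := (Real.dist_eq _ _).symm
            have e1 : |p.1 - p'.1| = dist p.1 p'.1 := (Real.dist_eq _ _).symm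
            rw [e1, e2]
            have := hqbound t
            have := hbbound t
            have h1 : |b t| * dist p.2 p'.2 ≤ (3 / δ) * dist p p' := by
              apply mul_le_mul (hbbound t) hd2 dist_nonneg (by positivity)
            have h2 : |q t| * dist p.1 p'.1 ≤ M * dist p p' := by
              apply mul_le_mul (hqbound t) hd1 dist_nonneg hMnn
            linarith
        _ ≤ (1 + 3 / δ + M) * dist p p' := by nlinarith [hdnn]
  set f : ℝ → ℝ × ℝ := fun t => (θ t, θ₁ t) with hfdef
  set G : ℝ → ℝ × ℝ := fun t => (c * β t, c * β₁ t) with hGdef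
  have hsubδ1 : Icc δ 1 ⊆ Icc (0:ℝ) 1 := Icc_subset_Icc_left (le_of_lt hδpos)
  have hderivs : ∀ t ∈ Ico δ 1, max δ t = t ∧ max 0 (min t 1) = t ∧ t ∈ Ioc (0:ℝ) 1 := by
    intro t ht
    refine ⟨max_eq_right ht.1, ?_, ⟨lt_of_lt_of_le hδpos ht.1, le_of_lt ht.2⟩⟩
    rw [min_eq_left (le_of_lt ht.2), max_eq_right (le_trans (le_of_lt hδpos) ht.1)]
  have hf' : ∀ t ∈ Ico δ 1, HasDerivWithinAt f (v t (f t)) (Ici t) t := by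
    intro t ht
    obtain ⟨e1, e2, hmem⟩ := hderivs t ht
    have htI : t ∈ Icc (0:ℝ) 1 := hsubδ1 (Ico_subset_Icc_self ht)
    have h := HasDerivWithinAt.prodMk ((hθd t htI).mono (Icc_subset_Icc_left htI.1))
      ((hθ₁d t htI).mono (Icc_subset_Icc_left htI.1))
    have h' := h.mono_of_mem_nhdsWithin (Icc_mem_nhdsGE_of_mem ⟨le_refl t, ht.2⟩)
    refine h'.congr_deriv (Eq.symm ?_)
    have hode := hθode t hmem
    simp only [hvdef, hfdef, hbdef, hqdef, e1, e2]
    have : -(3 / t) * θ₁ t - Q t * θ t = θ₂ t := by linarith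
    rw [this]
  have hG' : ∀ t ∈ Ico δ 1, HasDerivWithinAt G (v t (G t)) (Ici t) t := by
    intro t ht
    obtain ⟨e1, e2, hmem⟩ := hderivs t ht
    have htI : t ∈ Icc (0:ℝ) 1 := hsubδ1 (Ico_subset_Icc_self ht)
    have h := HasDerivWithinAt.prodMk (((hβd t htI).mono (Icc_subset_Icc_left htI.1)).const_mul c)
      (((hβ₁d t htI).mono (Icc_subset_Icc_left htI.1)).const_mul c)
    have h' := h.mono_of_mem_nhdsWithin (Icc_mem_nhdsGE_of_mem ⟨le_refl t, ht.2⟩)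
    refine h'.congr_deriv (Eq.symm ?_)
    have hode := hβode t hmem
    simp only [hvdef, hGdef, hbdef, hqdef, e1, e2]
    have : -(3 / t) * (c * β₁ t) - Q t * (c * β t) = c * β₂ t := by
      have : β₂ t = -((3 / t) * β₁ t + Q t * β t) := by linarith
      rw [this]; ring
    rw [this]
  have hfc : ContinuousOn f (Icc δ 1) :=
    ((hθc.mono hsubδ1).prodMk (hθ₁c.mono hsubδ1))
  have hGc : ContinuousOn G (Icc δ 1) :=
    (((hβc.mono hsubδ1).const_smul c).prodMk ((hβ₁c.mono hsubδ1).const_smul c))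
  have hfGδ : f δ = G δ := by
    have h1 : θ δ = c * β δ := hθeq δ (right_mem_Icc.mpr (le_of_lt hδpos))
    simp [hfdef, hGdef, h1, hθ₁δ]
  have hEq := ODE_solution_unique hlip hfc hf' hGc hG' hfGδ
  -- conclude c = 0
  have hθeq2 : ∀ s ∈ Icc (0:ℝ) 1, θ s = c * β s := by
    intro s hs
    rcases le_or_gt s δ with h | h
    · exact hθeq s ⟨hs.1, h⟩
    · have := hEq ⟨le_of_lt h, hs.2⟩
      exact congrArg Prod.fst this
  have hc0 : c = 0 := by
    have := hθeq2 1 h11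
    rw [hθ1] at this
    rcases mul_eq_zero.mp this.symm with h | h
    · exact h
    · exact absurd h hβ1
  intro s hs
  rw [hθeq2 s hs, hc0, zero_mul]
end

section
/- Let φ : (0, 1] → ℂ be continuously differentiable, assume that the map s ↦ s³φ′(s) is continuously differentiable on (0, 1], and assume the two integrability conditions ∫₀¹ s³|φ(s)|² ds < ∞ and ∫₀¹ s⁻³ |(d/ds)(s³φ′(s))|² ds < ∞. Then lim_{s→0⁺} s³φ′(s) = 0 and lim_{s→0⁺} s³φ(s) = 0. -/
/-!
Put `ψ = s³φ'`. Its derivative `g` is integrable on `(0,1]` by the AM-GM bound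
`|g| ≤ (s⁻³|g|² + s³)/2`, so `ψ` has a limit `L` at `0⁺`. Integrating `φ' = s⁻³ψ` against
the comparison function `s⁻²` gives `s²φ(s) → -L/2`. Then `s³|φ|² = s⁻¹|s²φ|²` is not integrable
at `0` unless `L = 0`, and `s³φ = s · s²φ → 0` in any case.
-/

open Set MeasureTheory Filter Topology Asymptotics

/-- `φ : (0,1] → ℂ` is continuously differentiable with derivative `φ₁`, the map
`s ↦ s³ φ₁ s` is continuously differentiable with derivative `g`, and both `φ` and
`s ↦ s⁻³ g s` belong to the weighted space `L²((0,1), s³ ds)` (a smooth-representative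
version of the domain of the singular Sturm–Liouville operator `T`). -/
def MemDomT (φ φ₁ g : ℝ → ℂ) : Prop :=
  (∀ s ∈ Ioc (0:ℝ) 1, HasDerivWithinAt φ (φ₁ s) (Ioc 0 1) s) ∧
  ContinuousOn φ₁ (Ioc 0 1) ∧
  (∀ s ∈ Ioc (0:ℝ) 1, HasDerivWithinAt (fun t : ℝ => (t:ℂ) ^ 3 * φ₁ t) (g s) (Ioc 0 1) s) ∧
  ContinuousOn g (Ioc 0 1) ∧
  IntegrableOn (fun s => s ^ 3 * ‖φ s‖ ^ 2) (Ioc 0 1) ∧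
  IntegrableOn (fun s => (s ^ 3)⁻¹ * ‖g s‖ ^ 2) (Ioc 0 1)

theorem MeasureTheory.IntegrableOn.of_inv_mul_norm_sq {α E : Type*} [MeasurableSpace α]
    [NormedAddCommGroup E] {μ : Measure α} {s : Set α} {g : α → E} {w : α → ℝ}
    (hs : MeasurableSet s) (hw : ∀ x ∈ s, 0 < w x) (hg : AEStronglyMeasurable g (μ.restrict s))
    (hwi : IntegrableOn w s μ) (hgw : IntegrableOn (fun x => (w x)⁻¹ * ‖g x‖ ^ 2) s μ) :
    IntegrableOn g s μ := by
  refine ((hgw.add hwi).div_const 2).mono' hg (ae_restrict_of_forall_mem hs fun x hx => ?_)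
  have hwx := hw x hx
  have amgm : (w x)⁻¹ * ‖g x‖ ^ 2 + w x - 2 * ‖g x‖ = (w x)⁻¹ * (‖g x‖ - w x) ^ 2 := by
    field_simp
    ring
  have : 0 ≤ (w x)⁻¹ * (‖g x‖ - w x) ^ 2 := by positivity
  simp only [Pi.add_apply]
  linarith

theorem not_integrableOn_Ioc_inv_mul_of_tendsto {u : ℝ → ℝ} {b c : ℝ} (hb : 0 < b) (hc : c ≠ 0)
    (hu : Tendsto u (𝓝[>] 0) (𝓝 c)) : ¬IntegrableOn (fun x => x⁻¹ * u x) (Ioc 0 b) := by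
  have hlog : ∀ᶠ x in 𝓝[>] (0:ℝ), DifferentiableAt ℝ Real.log x :=
    eventually_mem_nhdsWithin.mono fun x hx => Real.differentiableAt_log (ne_of_gt hx)
  have hone : (fun _ => (1:ℝ)) =O[𝓝[>] 0] u :=
    (isBigO_const_const 1 hc _).trans ((isEquivalent_const_iff_tendsto hc).2 hu).isBigO_symm
  have hbig : deriv Real.log =O[𝓝[>] 0] fun x => x⁻¹ * u x := by
    rw [Real.deriv_log']
    simpa only [mul_one] using (isBigO_refl (fun x : ℝ => x⁻¹) _).mul hone
  exact not_integrableOn_of_tendsto_norm_atTop_of_deriv_isBigO_filter _ (Ioc_mem_nhdsGT hb) hlog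
    (tendsto_abs_atBot_atTop.comp Real.tendsto_log_nhdsGT_zero) hbig

theorem hasDerivAt_inv_sq {x : ℝ} (hx : x ≠ 0) :
    HasDerivAt (fun y : ℝ => (y ^ 2)⁻¹) (-2 * (x ^ 3)⁻¹) x := by
  refine ((hasDerivAt_pow 2 x).inv (pow_ne_zero 2 hx)).congr_deriv ?_
  field_simp
  ring

section Calculus

variable {E : Type*} [NormedAddCommGroup E] [NormedSpace ℝ E] {f f' : ℝ → E} {a b : ℝ}

theorem integral_eq_sub_of_hasDerivWithinAt_Ioc [CompleteSpace E]
    (hf : ∀ x ∈ Ioc a b, HasDerivWithinAt f (f' x) (Ioc a b) x) (hf' : IntegrableOn f' (Ioc a b))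
    {x : ℝ} (hx : x ∈ Ioc a b) : ∫ t in x..b, f' t = f b - f x := by
  have hsub : Icc x b ⊆ Ioc a b := fun t ht => ⟨hx.1.trans_le ht.1, ht.2⟩
  refine intervalIntegral.integral_eq_sub_of_hasDerivAt_of_le hx.2
    (fun t ht => (hf t (hsub ht)).continuousWithinAt.mono hsub)
    (fun t ht => (hf t (hsub (Ioo_subset_Icc_self ht))).hasDerivAt
      (Ioc_mem_nhds (hx.1.trans ht.1) ht.2)) ?_
  exact (intervalIntegrable_iff_integrableOn_Ioc_of_le hx.2).2
    (hf'.mono_set (Ioc_subset_Ioc_left hx.1.le))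

theorem exists_tendsto_nhdsGT_of_hasDerivWithinAt_of_integrableOn [CompleteSpace E] (hab : a < b)
    (hf : ∀ x ∈ Ioc a b, HasDerivWithinAt f (f' x) (Ioc a b) x) (hf' : IntegrableOn f' (Ioc a b)) :
    ∃ L, Tendsto f (𝓝[>] a) (𝓝 L) := by
  have hprim : Tendsto (fun x => ∫ t in x..b, f' t) (𝓝[>] a) (𝓝 (∫ t in a..b, f' t)) := by
    have hIcc : IntegrableOn f' (uIcc a b) := by
      rwa [uIcc_of_le hab.le, integrableOn_Icc_iff_integrableOn_Ioc]
    have hcont := intervalIntegral.continuousOn_primitive_interval_left hIcc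
    rw [uIcc_of_le hab.le] at hcont
    rw [← nhdsWithin_Ioo_eq_nhdsGT hab]
    exact (hcont a (left_mem_Icc.2 hab.le)).mono Ioo_subset_Icc_self
  refine ⟨f b - ∫ t in a..b, f' t, (tendsto_const_nhds.sub hprim).congr' ?_⟩
  filter_upwards [Ioc_mem_nhdsGT hab] with x hx
  rw [integral_eq_sub_of_hasDerivWithinAt_Ioc hf hf' hx, sub_sub_cancel]

theorem norm_sub_le_of_norm_deriv_le_inv_cube {ε : ℝ} (ha : 0 < a) (hab : a ≤ b)
    (hf : ∀ x ∈ Icc a b, HasDerivWithinAt f (f' x) (Icc a b) x)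
    (bound : ∀ x ∈ Icc a b, ‖f' x‖ ≤ ε * (x ^ 3)⁻¹) :
    ‖f b - f a‖ ≤ ε / 2 * ((a ^ 2)⁻¹ - (b ^ 2)⁻¹) := by
  have hB : ∀ x ∈ Icc a b, HasDerivAt (fun y => ε / 2 * ((a ^ 2)⁻¹ - (y ^ 2)⁻¹))
      (ε * (x ^ 3)⁻¹) x := fun x hx => by
    refine (((hasDerivAt_inv_sq (ha.trans_le hx.1).ne').const_sub _).const_mul
      (ε / 2)).congr_deriv ?_
    ring
  refine image_norm_le_of_norm_deriv_right_le_deriv_boundary' (f := fun x => f x - f a)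
    (fun x hx => ((hf x hx).continuousWithinAt).sub continuousWithinAt_const) (fun x hx => ?_)
    (by simp) (fun x hx => (hB x hx).continuousAt.continuousWithinAt)
    (fun x hx => (hB x (Ico_subset_Icc_self hx)).hasDerivWithinAt)
    (fun x hx => bound x (Ico_subset_Icc_self hx)) (right_mem_Icc.2 hab)
  have hmem : Icc a b ∈ 𝓝[≥] x :=
    mem_of_superset (Icc_mem_nhdsGE hx.2) (Icc_subset_Icc_left hx.1)
  exact ((hf x (Ico_subset_Icc_self hx)).mono_of_mem_nhdsWithin hmem).sub_const (f a)

theorem tendsto_sq_smul_of_tendsto_cube_smul_deriv_zero (hb : 0 < b)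
    (hf : ∀ x ∈ Ioc 0 b, HasDerivWithinAt f (f' x) (Ioc 0 b) x)
    (hf' : Tendsto (fun x => x ^ 3 • f' x) (𝓝[>] 0) (𝓝 0)) :
    Tendsto (fun x => x ^ 2 • f x) (𝓝[>] 0) (𝓝 0) := by
  rw [NormedAddGroup.tendsto_nhds_zero]
  intro ε hε
  obtain ⟨δ, hδ, hδb, hsmall_deriv⟩ :
      ∃ δ, 0 < δ ∧ δ ≤ b ∧ ∀ x ∈ Ioc 0 δ, ‖x ^ 3 • f' x‖ ≤ ε / 2 := by
    obtain ⟨δ, hδ, hsub⟩ := mem_nhdsGT_iff_exists_Ioc_subset.1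
      (NormedAddGroup.tendsto_nhds_zero.1 hf' (ε / 2) (by positivity))
    exact ⟨min δ b, lt_min hδ hb, min_le_right _ _,
      fun x hx => (hsub ⟨hx.1, hx.2.trans (min_le_left _ _)⟩).le⟩
  have hnear : ∀ x ∈ Ioc 0 δ, ‖x ^ 2 • f x‖ ≤ x ^ 2 * ‖f δ‖ + ε / 4 := by
    intro x hx
    have hsub : Icc x δ ⊆ Ioc 0 b := fun y hy => ⟨hx.1.trans_le hy.1, hy.2.trans hδb⟩
    have hdiff := norm_sub_le_of_norm_deriv_le_inv_cube hx.1 hx.2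
      (fun y hy => (hf y (hsub hy)).mono hsub) (ε := ε / 2) fun y hy => by
        have hy0 : 0 < y := hx.1.trans_le hy.1
        rw [le_mul_inv_iff₀ (by positivity), mul_comm, ← Real.norm_of_nonneg (pow_pos hy0 3).le,
          ← norm_smul]
        exact hsmall_deriv y ⟨hy0, hy.2⟩
    have hfx : ‖f x‖ ≤ ‖f δ‖ + ε / 4 * (x ^ 2)⁻¹ := by
      have : 0 ≤ ε / 2 / 2 * (δ ^ 2)⁻¹ := by positivity
      linarith [norm_le_norm_add_norm_sub' (f x) (f δ), norm_sub_rev (f x) (f δ)]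
    calc ‖x ^ 2 • f x‖ = x ^ 2 * ‖f x‖ := by rw [norm_smul, Real.norm_of_nonneg (by positivity)]
      _ ≤ x ^ 2 * (‖f δ‖ + ε / 4 * (x ^ 2)⁻¹) := by gcongr
      _ = x ^ 2 * ‖f δ‖ + ε / 4 := by field_simp [hx.1.ne']
  have hsmall : ∀ᶠ x in 𝓝[>] 0, x ^ 2 * ‖f δ‖ < ε / 2 := by
    have : Tendsto (fun x : ℝ => x ^ 2 * ‖f δ‖) (𝓝[>] 0) (𝓝 0) :=
      (((continuous_pow 2).mul continuous_const).tendsto' 0 0 (by simp)).mono_left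
        nhdsWithin_le_nhds
    exact this.eventually (gt_mem_nhds (by positivity))
  filter_upwards [hsmall, Ioc_mem_nhdsGT hδ] with x hx hxδ
  linarith [hnear x hxδ]

theorem tendsto_sq_smul_of_tendsto_cube_smul_deriv {L : E} (hb : 0 < b)
    (hf : ∀ x ∈ Ioc 0 b, HasDerivWithinAt f (f' x) (Ioc 0 b) x)
    (hf' : Tendsto (fun x => x ^ 3 • f' x) (𝓝[>] 0) (𝓝 L)) :
    Tendsto (fun x => x ^ 2 • f x) (𝓝[>] 0) (𝓝 (-(2:ℝ)⁻¹ • L)) := by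
  set c : E := (2:ℝ)⁻¹ • L
  -- `-x⁻² c` is the singular part of `f` that carries the limit `L` of `x³ f'`.
  have hχ : ∀ x ∈ Ioc 0 b, HasDerivWithinAt (fun x => f x + (x ^ 2)⁻¹ • c)
      ((x ^ 3)⁻¹ • (x ^ 3 • f' x - L)) (Ioc 0 b) x := by
    intro x hx
    refine ((hf x hx).add ((hasDerivAt_inv_sq hx.1.ne').smul_const c).hasDerivWithinAt)
      |>.congr_deriv ?_
    rw [smul_sub, inv_smul_smul₀ (pow_ne_zero 3 hx.1.ne')]
    module
  have hχ' : Tendsto (fun x => x ^ 3 • (x ^ 3)⁻¹ • (x ^ 3 • f' x - L)) (𝓝[>] 0) (𝓝 0) := by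
    refine (tendsto_sub_nhds_zero_iff.2 hf').congr' ?_
    filter_upwards [self_mem_nhdsWithin] with x hx
    rw [smul_inv_smul₀ (pow_ne_zero 3 (ne_of_gt (mem_Ioi.1 hx)))]
  rw [neg_smul, ← zero_sub]
  refine ((tendsto_sq_smul_of_tendsto_cube_smul_deriv_zero hb hχ hχ').sub_const c).congr' ?_
  filter_upwards [self_mem_nhdsWithin] with x hx
  rw [smul_add, smul_inv_smul₀ (pow_ne_zero 2 (ne_of_gt (mem_Ioi.1 hx))), add_sub_cancel_right]

end Calculus

/-- Functions in the domain of the singular Sturm–Liouville operator satisfy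
`s³ φ'(s) → 0` and `s³ φ(s) → 0` as `s → 0⁺`. -/
theorem domain_boundary_behaviour_at_zero
    (φ φ₁ g : ℝ → ℂ) (hφ : MemDomT φ φ₁ g) :
    Tendsto (fun s : ℝ => (s:ℂ) ^ 3 * φ₁ s) (nhdsWithin 0 (Ioc 0 1)) (nhds 0) ∧
    Tendsto (fun s : ℝ => (s:ℂ) ^ 3 * φ s) (nhdsWithin 0 (Ioc 0 1)) (nhds 0) := by
  obtain ⟨hφ', -, hψ', hg, hφL2, hgL2⟩ := hφ
  have hsmul : ∀ (h : ℝ → ℂ) (n : ℕ), (fun s : ℝ => (s:ℂ) ^ n * h s) = fun s => s ^ n • h s :=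
    fun h n => funext fun s => by simp [Complex.real_smul]
  rw [nhdsWithin_Ioc_eq_nhdsGT one_pos, hsmul, hsmul]
  have hgi : IntegrableOn g (Ioc 0 1) :=
    .of_inv_mul_norm_sq measurableSet_Ioc (fun s hs => pow_pos hs.1 3)
      (hg.aestronglyMeasurable measurableSet_Ioc) (continuous_pow 3).integrableOn_Ioc hgL2
  obtain ⟨L, hL⟩ := exists_tendsto_nhdsGT_of_hasDerivWithinAt_of_integrableOn one_pos hψ' hgi
  rw [hsmul] at hL
  have hφ2 := tendsto_sq_smul_of_tendsto_cube_smul_deriv one_pos hφ' hL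
  have hL0 : L = 0 := by
    by_contra hL0
    refine not_integrableOn_Ioc_inv_mul_of_tendsto one_pos ?_ (hφ2.norm.pow 2)
      (hφL2.congr_fun (fun s hs => ?_) measurableSet_Ioc)
    · simpa [norm_smul] using hL0
    · have := hs.1.ne'
      rw [norm_smul, Real.norm_of_nonneg (by positivity)]
      field_simp
  refine ⟨hL0 ▸ hL, ?_⟩
  have hs : Tendsto (fun s : ℝ => s) (𝓝[>] 0) (𝓝 0) := nhdsWithin_le_nhds
  convert hs.smul hφ2 using 2 with s
  · rw [smul_smul, ← pow_succ']
  · rw [zero_smul]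
end

section
/- Let d > 0, g > 0, h ∈ ℝ, and let q : (0, 1) → ℝ be bounded and measurable, and set M := sup_{s∈(0,1)} max(−q(s), 0) (the supremum of the negative part of q). Assume h > M. Let μ ∈ ℂ and let φ : (0, 1] → ℂ be continuously differentiable and not identically zero, with s ↦ s³φ′(s) continuously differentiable on (0, 1], satisfying ∫₀¹ s³|φ(s)|² ds < ∞ and ∫₀¹ s⁻³ |(d/ds)(s³φ′(s))|² ds < ∞, such that −d⁻² s⁻³ (d/ds)(s³φ′(s)) + q(s)φ(s) = μ·φ(s) for all s ∈ (0, 1) and −g·φ′(1) − h·φ(1) = μ·φ(1). Then φ(1) ≠ 0, μ is real, and (μ + M)·( d² ∫₀¹ s³|φ(s)|² ds − g⁻¹|φ(1)|² ) > 0. -/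
open Set MeasureTheory Filter Topology intervalIntegral

lemma sl_ftc_aux {f f' : ℝ → ℂ}
    (hd : ∀ s ∈ Ioc (0:ℝ) 1, HasDerivWithinAt f (f' s) (Ioc 0 1) s)
    (hc : ContinuousOn f' (Ioc 0 1)) {a b : ℝ} (ha : 0 < a) (hab : a ≤ b) (hb : b ≤ 1) :
    ∫ s in a..b, f' s = f b - f a := by
  have hsub : Icc a b ⊆ Ioc (0:ℝ) 1 := fun x hx => ⟨lt_of_lt_of_le ha hx.1, hx.2.trans hb⟩
  apply integral_eq_sub_of_hasDeriv_right_of_le hab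
  · exact fun x hx => ((hd x (hsub hx)).continuousWithinAt).mono hsub
  · intro x hx
    have hx' : x ∈ Ioc (0:ℝ) 1 := ⟨ha.trans hx.1, hx.2.le.trans hb⟩
    have : HasDerivAt f (f' x) x :=
      (hd x hx').hasDerivAt (Ioc_mem_nhds hx'.1 (lt_of_lt_of_le hx.2 hb))
    exact this.hasDerivWithinAt
  · rw [intervalIntegrable_iff_integrableOn_Icc_of_le hab]
    exact (hc.mono hsub).integrableOn_compact isCompact_Icc

lemma sl_tendsto_setIntegral {E : Type*} [NormedAddCommGroup E] [NormedSpace ℝ E]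
    {f : ℝ → E} (hf : IntegrableOn f (Ioc 0 1)) :
    Tendsto (fun n : ℕ => ∫ s in Ioc (((n:ℝ)+2)⁻¹) 1, f s) atTop
      (𝓝 (∫ s in Ioc (0:ℝ) 1, f s)) := by
  have hU : (⋃ n : ℕ, Ioc (((n:ℝ)+2)⁻¹) 1) = Ioc (0:ℝ) 1 := by
    ext x
    simp only [mem_iUnion, mem_Ioc]
    constructor
    · rintro ⟨n, h1, h2⟩
      exact ⟨lt_trans (by positivity) h1, h2⟩
    · rintro ⟨h1, h2⟩
      obtain ⟨n, hn⟩ := exists_nat_gt x⁻¹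
      refine ⟨n, ?_, h2⟩
      rw [inv_lt_comm₀ (by positivity) h1]
      calc x⁻¹ < n := hn
        _ ≤ (n:ℝ) + 2 := by linarith
  have := tendsto_setIntegral_of_monotone (s := fun n : ℕ => Ioc (((n:ℝ)+2)⁻¹) 1)
    (fun n => measurableSet_Ioc) ?_ (by rwa [hU])
  · rwa [hU] at this
  · intro n m hnm
    apply Ioc_subset_Ioc_left
    apply inv_anti₀ (by positivity)
    have : (n:ℝ) ≤ m := Nat.cast_le.mpr hnm
    linarith

lemma sl_vanish (d : ℝ) (hd : 0 < d) (μ : ℂ) (q : ℝ → ℝ) {C : ℝ}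
    (hC : ∀ s ∈ Ioo (0:ℝ) 1, |q s| ≤ C)
    {φ φ₁ gφ : ℝ → ℂ}
    (hdφ : ∀ s ∈ Ioc (0:ℝ) 1, HasDerivWithinAt φ (φ₁ s) (Ioc 0 1) s)
    (hdv : ∀ s ∈ Ioc (0:ℝ) 1,
      HasDerivWithinAt (fun t : ℝ => (t:ℂ) ^ 3 * φ₁ t) (gφ s) (Ioc 0 1) s)
    (hodeg : ∀ s ∈ Ioo (0:ℝ) 1, gφ s = (d:ℂ)^2 * (s:ℂ)^3 * ((q s : ℂ) - μ) * φ s)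
    (h1 : φ 1 = 0) (h1' : φ₁ 1 = 0) {s₀ : ℝ} (hs₀ : s₀ ∈ Ioo (0:ℝ) 1) : φ s₀ = 0 := by
  set v : ℝ → ℂ := fun s => (s:ℂ) ^ 3 * φ₁ s with hv
  have hφcont : ContinuousOn φ (Ioc 0 1) := fun s hs => (hdφ s hs).continuousWithinAt
  have hvcont : ContinuousOn v (Ioc 0 1) := fun s hs => (hdv s hs).continuousWithinAt
  set F : ℝ → ℂ × ℂ := fun t => (φ (1 - t), v (1 - t)) with hF
  set t : ℝ := 1 - s₀ with htdef
  have ht0 : 0 < t := sub_pos.mpr hs₀.2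
  have ht1 : t < 1 := by simp only [htdef]; linarith [hs₀.1]
  set K : ℝ := max ((s₀ ^ 3)⁻¹) (d ^ 2 * (C + ‖μ‖)) with hK
  have hs₀3 : (0:ℝ) < s₀ ^ 3 := pow_pos hs₀.1 3
  have hK0 : 0 ≤ K := le_trans (inv_nonneg.mpr hs₀3.le) (le_max_left _ _)
  have hmaps : ∀ τ ∈ Icc (0:ℝ) t, 1 - τ ∈ Ioc (0:ℝ) 1 := by
    intro τ hτ
    have h2 := hτ.2
    simp only [htdef] at h2
    exact ⟨by linarith [hs₀.1], by linarith [hτ.1]⟩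
  have hFcont : ContinuousOn F (Icc 0 t) := by
    have hc : ContinuousOn (fun τ : ℝ => 1 - τ) (Icc (0:ℝ) t) :=
      (continuous_const.sub continuous_id).continuousOn
    exact (hφcont.comp hc hmaps).prodMk (hvcont.comp hc hmaps)
  have key : ∀ η ∈ Ioc (0:ℝ) t, ‖F t‖ ≤ ‖F η‖ * Real.exp K := by
    intro η hη
    set F' : ℝ → ℂ × ℂ := fun τ => (-φ₁ (1 - τ), -gφ (1 - τ)) with hF'
    have hsub : Icc η t ⊆ Icc (0:ℝ) t := Icc_subset_Icc hη.1.le le_rfl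
    have main := norm_le_gronwallBound_of_norm_deriv_right_le (f := F) (f' := F')
      (δ := ‖F η‖) (K := K) (ε := 0) (a := η) (b := t) (hFcont.mono hsub) ?_ le_rfl ?_
    · have h2 := main t ⟨hη.2, le_rfl⟩
      rw [gronwallBound_ε0] at h2
      refine h2.trans ?_
      apply mul_le_mul_of_nonneg_left _ (norm_nonneg _)
      apply Real.exp_le_exp.2
      nlinarith [hη.1, ht1]
    · intro τ hτ
      have hs : 1 - τ ∈ Ioo (0:ℝ) 1 := by
        have h2 := hτ.2
        simp only [htdef] at h2
        exact ⟨by linarith [hs₀.1], by linarith [hη.1, hτ.1]⟩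
      have hsIoc : 1 - τ ∈ Ioc (0:ℝ) 1 := ⟨hs.1, hs.2.le⟩
      have hnbhd : Ioc (0:ℝ) 1 ∈ 𝓝 (1 - τ) := Ioc_mem_nhds hs.1 hs.2
      have hφd : HasDerivAt φ (φ₁ (1 - τ)) (1 - τ) := (hdφ _ hsIoc).hasDerivAt hnbhd
      have hvd : HasDerivAt v (gφ (1 - τ)) (1 - τ) := (hdv _ hsIoc).hasDerivAt hnbhd
      have hlin : HasDerivAt (fun τ : ℝ => 1 - τ) (-1) τ := (hasDerivAt_id τ).const_sub 1
      have d1 : HasDerivAt (fun τ => φ (1 - τ)) (-φ₁ (1 - τ)) τ := by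
        simpa [Function.comp_def] using hφd.scomp τ hlin
      have d2 : HasDerivAt (fun τ => v (1 - τ)) (-gφ (1 - τ)) τ := by
        simpa [Function.comp_def] using hvd.scomp τ hlin
      exact ((d1.prodMk d2).hasDerivWithinAt)
    · intro τ hτ
      set s : ℝ := 1 - τ with hsd
      have hs : s ∈ Ioo (0:ℝ) 1 := by
        have h2 := hτ.2
        simp only [htdef] at h2
        exact ⟨by simp only [hsd]; linarith [hs₀.1], by simp only [hsd]; linarith [hη.1, hτ.1]⟩
      have hss₀ : s₀ ≤ s := by
        have h2 := hτ.2
        simp only [htdef] at h2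
        simp only [hsd]; linarith
      have hsC : (s:ℂ) ^ 3 ≠ 0 :=
        pow_ne_zero 3 (Complex.ofReal_ne_zero.mpr hs.1.ne')
      have hnormF : ‖F τ‖ = max ‖φ s‖ ‖v s‖ := Prod.norm_def _
      have hb1 : ‖φ₁ s‖ ≤ K * ‖F τ‖ := by
        have he : φ₁ s = ((s:ℂ) ^ 3)⁻¹ * v s := by rw [inv_mul_eq_div, eq_div_iff hsC]; simp only [hv]; ring
        have hn : ‖((s:ℂ) ^ 3)⁻¹ * v s‖ = (s ^ 3)⁻¹ * ‖v s‖ := by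
          rw [norm_mul, norm_inv, norm_pow, Complex.norm_real, Real.norm_eq_abs,
            abs_of_pos hs.1]
        rw [he, hn]
        have h2 : (s ^ 3)⁻¹ ≤ (s₀ ^ 3)⁻¹ :=
          inv_anti₀ hs₀3 (pow_le_pow_left₀ hs₀.1.le hss₀ 3)
        have h4 : ‖v s‖ ≤ ‖F τ‖ := by rw [hnormF]; exact le_max_right _ _
        exact mul_le_mul (h2.trans (le_max_left _ _)) h4 (norm_nonneg _) hK0
      have hb2 : ‖gφ s‖ ≤ K * ‖F τ‖ := by
        rw [hodeg s hs]
        have e1 : ‖(d:ℂ) ^ 2 * (s:ℂ) ^ 3 * ((q s : ℂ) - μ) * φ s‖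
            = d ^ 2 * s ^ 3 * ‖(q s : ℂ) - μ‖ * ‖φ s‖ := by
          rw [norm_mul, norm_mul, norm_mul, norm_pow, norm_pow, Complex.norm_real,
            Complex.norm_real, Real.norm_eq_abs, Real.norm_eq_abs, abs_of_pos hd,
            abs_of_pos hs.1]
        rw [e1]
        have h5 : ‖(q s : ℂ) - μ‖ ≤ C + ‖μ‖ := by
          calc ‖(q s : ℂ) - μ‖ ≤ ‖(q s : ℂ)‖ + ‖μ‖ := norm_sub_le _ _
            _ ≤ C + ‖μ‖ := by
                rw [Complex.norm_real, Real.norm_eq_abs]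
                exact add_le_add_left (hC s hs) _
        have h6 : s ^ 3 ≤ 1 := by
          calc s ^ 3 ≤ 1 ^ 3 := pow_le_pow_left₀ hs.1.le hs.2.le 3
            _ = 1 := one_pow 3
        have h7 : ‖φ s‖ ≤ ‖F τ‖ := by rw [hnormF]; exact le_max_left _ _
        have h8 : d ^ 2 * s ^ 3 * ‖(q s : ℂ) - μ‖ ≤ K := by
          have hq0 : 0 ≤ ‖(q s : ℂ) - μ‖ := norm_nonneg _
          have h9 : s ^ 3 * ‖(q s : ℂ) - μ‖ ≤ 1 * (C + ‖μ‖) :=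
            mul_le_mul h6 h5 hq0 zero_le_one
          have h10 : d ^ 2 * (s ^ 3 * ‖(q s : ℂ) - μ‖) ≤ d ^ 2 * (1 * (C + ‖μ‖)) :=
            mul_le_mul_of_nonneg_left h9 (sq_nonneg d)
          calc d ^ 2 * s ^ 3 * ‖(q s : ℂ) - μ‖ = d ^ 2 * (s ^ 3 * ‖(q s : ℂ) - μ‖) := by ring
            _ ≤ d ^ 2 * (1 * (C + ‖μ‖)) := h10
            _ = d ^ 2 * (C + ‖μ‖) := by ring
            _ ≤ K := le_max_right _ _
        exact mul_le_mul h8 h7 (norm_nonneg _) hK0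
      rw [add_zero]
      have hF'n : ‖F' τ‖ = max ‖φ₁ s‖ ‖gφ s‖ := by
        rw [Prod.norm_def]; simp [hF', hsd]
      rw [hF'n]
      exact max_le hb1 hb2
  have hF0 : F 0 = 0 := by
    simp only [hF, sub_zero]
    rw [h1]
    simp [hv, h1']
  have hne : (𝓝[Ioc (0:ℝ) t] 0).NeBot := by
    apply mem_closure_iff_nhdsWithin_neBot.mp
    rw [closure_Ioc ht0.ne]
    exact ⟨le_rfl, ht0.le⟩
  have htend : Tendsto (fun η => ‖F η‖ * Real.exp K) (𝓝[Ioc (0:ℝ) t] 0) (𝓝 0) := by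
    have hc0 : ContinuousWithinAt F (Icc 0 t) 0 := hFcont 0 ⟨le_rfl, ht0.le⟩
    have h3 : Tendsto F (𝓝[Ioc (0:ℝ) t] 0) (𝓝 (F 0)) :=
      hc0.tendsto.mono_left (nhdsWithin_mono _ Ioc_subset_Icc_self)
    rw [hF0] at h3
    simpa using h3.norm.mul_const (Real.exp K)
  have hle : ‖F t‖ ≤ 0 := by
    apply ge_of_tendsto htend
    filter_upwards [self_mem_nhdsWithin] with η hη
    exact key η hη
  have hFt : F t = 0 := norm_le_zero_iff.mp hle
  have hfst : φ (1 - t) = 0 := congrArg Prod.fst hFt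
  have : (1:ℝ) - t = s₀ := by simp only [htdef]; ring
  rwa [this] at hfst

section
variable {φ φ₁ gφ : ℝ → ℂ}

lemma sl_gφ_int (hgcont : ContinuousOn gφ (Ioc 0 1))
    (hintV : IntegrableOn (fun s => (s ^ 3)⁻¹ * ‖gφ s‖ ^ 2) (Ioc (0:ℝ) 1)) :
    IntegrableOn gφ (Ioc (0:ℝ) 1) := by
  have hmeas : AEStronglyMeasurable gφ (volume.restrict (Ioc (0:ℝ) 1)) :=
    hgcont.aestronglyMeasurable measurableSet_Ioc
  have hs3 : IntegrableOn (fun s : ℝ => s ^ 3) (Ioc (0:ℝ) 1) :=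
    (continuous_pow 3).integrableOn_Ioc
  refine Integrable.mono' (((hs3.add hintV).div_const 2)) hmeas ?_
  rw [ae_restrict_iff' measurableSet_Ioc]
  filter_upwards with s hs
  have h3 : (0:ℝ) < s ^ 3 := pow_pos hs.1 3
  have hpr : Real.sqrt (s ^ 3) * Real.sqrt ((s ^ 3)⁻¹) = 1 := by
    rw [← Real.sqrt_mul h3.le, mul_inv_cancel₀ h3.ne', Real.sqrt_one]
  have h4 := Real.sq_sqrt h3.le
  have h5 := Real.sq_sqrt (inv_nonneg.mpr h3.le)
  have h6 := sq_nonneg (Real.sqrt (s ^ 3) - Real.sqrt ((s ^ 3)⁻¹) * ‖gφ s‖)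
  have h7 : (0:ℝ) ≤ ‖gφ s‖ := norm_nonneg _
  simp only [Pi.add_apply]
  nlinarith [h4, h5, h6, h7, hpr]

lemma sl_G_bound (hgcont : ContinuousOn gφ (Ioc 0 1))
    (hintV : IntegrableOn (fun s => (s ^ 3)⁻¹ * ‖gφ s‖ ^ 2) (Ioc (0:ℝ) 1))
    {a : ℝ} (ha : a ∈ Ioc (0:ℝ) 1) :
    ∫ s in Ioc 0 a, ‖gφ s‖ ≤
      ((1/4 + ∫ s in Ioc (0:ℝ) 1, (s ^ 3)⁻¹ * ‖gφ s‖ ^ 2)/2) * a ^ 2 := by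
  set V1 : ℝ := ∫ s in Ioc (0:ℝ) 1, (s ^ 3)⁻¹ * ‖gφ s‖ ^ 2 with hV1
  have hsub : Ioc 0 a ⊆ Ioc (0:ℝ) 1 := Ioc_subset_Ioc le_rfl ha.2
  have hga : IntegrableOn (fun s => ‖gφ s‖) (Ioc 0 a) :=
    ((sl_gφ_int hgcont hintV).mono_set hsub).norm
  have hintVa : IntegrableOn (fun s => (s ^ 3)⁻¹ * ‖gφ s‖ ^ 2) (Ioc 0 a) :=
    hintV.mono_set hsub
  have hs3a : IntegrableOn (fun s : ℝ => s ^ 3) (Ioc (0:ℝ) a) :=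
    (continuous_pow 3).integrableOn_Ioc
  have hrhsint : IntegrableOn
      (fun s => (a⁻¹ ^ 2 * s ^ 3 + a ^ 2 * ((s ^ 3)⁻¹ * ‖gφ s‖ ^ 2))/2) (Ioc 0 a) :=
    ((hs3a.const_mul _).add (hintVa.const_mul _)).div_const 2
  have step1 : ∫ s in Ioc 0 a, ‖gφ s‖ ≤
      ∫ s in Ioc 0 a, (a⁻¹ ^ 2 * s ^ 3 + a ^ 2 * ((s ^ 3)⁻¹ * ‖gφ s‖ ^ 2))/2 := by
    apply setIntegral_mono_on hga hrhsint measurableSet_Ioc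
    intro s hs
    have h3 : (0:ℝ) < s ^ 3 := pow_pos hs.1 3
    have hpr : Real.sqrt (s ^ 3) * Real.sqrt ((s ^ 3)⁻¹) = 1 := by
      rw [← Real.sqrt_mul h3.le, mul_inv_cancel₀ h3.ne', Real.sqrt_one]
    have h4 := Real.sq_sqrt h3.le
    have h5 := Real.sq_sqrt (inv_nonneg.mpr h3.le)
    have h6 := sq_nonneg (a⁻¹ * Real.sqrt (s ^ 3) - a * Real.sqrt ((s ^ 3)⁻¹) * ‖gφ s‖)
    have h7 : (0:ℝ) ≤ ‖gφ s‖ := norm_nonneg _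
    have ha1 : a⁻¹ * a = 1 := inv_mul_cancel₀ ha.1.ne'
    have key : (a⁻¹ * Real.sqrt (s ^ 3)) * (a * (Real.sqrt ((s ^ 3)⁻¹) * ‖gφ s‖))
        = ‖gφ s‖ := by
      calc (a⁻¹ * Real.sqrt (s ^ 3)) * (a * (Real.sqrt ((s ^ 3)⁻¹) * ‖gφ s‖))
          = (a⁻¹ * a) * ((Real.sqrt (s ^ 3) * Real.sqrt ((s ^ 3)⁻¹)) * ‖gφ s‖) := by ring
        _ = ‖gφ s‖ := by rw [ha1, hpr]; ring
    have e4 : a⁻¹ ^ 2 * Real.sqrt (s ^ 3) ^ 2 = a⁻¹ ^ 2 * s ^ 3 := by rw [h4]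
    have e5 : a ^ 2 * (Real.sqrt ((s ^ 3)⁻¹) ^ 2 * ‖gφ s‖ ^ 2)
        = a ^ 2 * ((s ^ 3)⁻¹ * ‖gφ s‖ ^ 2) := by rw [h5]
    nlinarith [h6, key, e4, e5]
  have hs3int : ∫ s in Ioc (0:ℝ) a, s ^ 3 = a ^ 4 / 4 := by
    rw [← intervalIntegral.integral_of_le ha.1.le, integral_pow]
    norm_num
  have hVa : ∫ s in Ioc (0:ℝ) a, (s ^ 3)⁻¹ * ‖gφ s‖ ^ 2 ≤ V1 := by
    apply setIntegral_mono_set hintV ?_ (HasSubset.Subset.eventuallyLE hsub)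
    filter_upwards [ae_restrict_mem measurableSet_Ioc] with s hs
    have h3 : (0:ℝ) < s ^ 3 := pow_pos hs.1 3
    positivity
  have hVa0 : 0 ≤ ∫ s in Ioc (0:ℝ) a, (s ^ 3)⁻¹ * ‖gφ s‖ ^ 2 := by
    apply setIntegral_nonneg measurableSet_Ioc
    intro s hs
    have h3 : (0:ℝ) < s ^ 3 := pow_pos hs.1 3
    positivity
  have step2 : ∫ s in Ioc 0 a, (a⁻¹ ^ 2 * s ^ 3 + a ^ 2 * ((s ^ 3)⁻¹ * ‖gφ s‖ ^ 2))/2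
      = (a⁻¹ ^ 2 * (a ^ 4 / 4) + a ^ 2 * ∫ s in Ioc (0:ℝ) a, (s ^ 3)⁻¹ * ‖gφ s‖ ^ 2)/2 := by
    rw [MeasureTheory.integral_div, integral_add (hs3a.const_mul _) (hintVa.const_mul _),
      MeasureTheory.integral_const_mul, MeasureTheory.integral_const_mul, hs3int]
  rw [step2] at step1
  refine step1.trans ?_
  have ha2 : a⁻¹ ^ 2 * (a ^ 4 / 4) = a ^ 2 / 4 := by
    rw [inv_pow]
    field_simp [ha.1.ne']
  rw [ha2]
  have := mul_le_mul_of_nonneg_left hVa (sq_nonneg a)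
  nlinarith [sq_nonneg a]

end

lemma sl_int_inv_cube {a b : ℝ} (ha : 0 < a) (hab : a ≤ b) :
    ∫ s in a..b, (s ^ 3)⁻¹ = ((a ^ 2)⁻¹ - (b ^ 2)⁻¹)/2 := by
  have h0 : (0:ℝ) ∉ uIcc a b := by
    rw [uIcc_of_le hab]
    intro hmem
    exact absurd hmem.1 (not_le.mpr ha)
  have hcg : EqOn (fun s : ℝ => (s ^ 3)⁻¹) (fun s : ℝ => s ^ (-3 : ℤ)) (uIcc a b) := by
    intro s _
    simp only [zpow_neg]
    norm_cast
  rw [integral_congr hcg, integral_zpow (Or.inr ⟨by norm_num, h0⟩)]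
  have hb0 : b ≠ 0 := (ha.trans_le hab).ne'
  have ha0 : a ≠ 0 := ha.ne'
  norm_num [zpow_neg]
  rw [div_eq_div_iff (by positivity) (by norm_num : (2:ℝ) ≠ 0)]
  field_simp
  norm_cast
  ring

section
variable {φ φ₁ gφ : ℝ → ℂ}

lemma sl_v_decomp
    (hdv : ∀ s ∈ Ioc (0:ℝ) 1,
      HasDerivWithinAt (fun t : ℝ => (t:ℂ) ^ 3 * φ₁ t) (gφ s) (Ioc 0 1) s)
    (hgcont : ContinuousOn gφ (Ioc 0 1))
    (hintV : IntegrableOn (fun s => (s ^ 3)⁻¹ * ‖gφ s‖ ^ 2) (Ioc (0:ℝ) 1))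
    {a : ℝ} (ha : a ∈ Ioc (0:ℝ) 1) :
    (a:ℂ) ^ 3 * φ₁ a
      = (((1:ℝ):ℂ) ^ 3 * φ₁ 1 - ∫ s in Ioc (0:ℝ) 1, gφ s) + ∫ s in Ioc 0 a, gφ s := by
  have hint : IntegrableOn gφ (Ioc (0:ℝ) 1) := sl_gφ_int hgcont hintV
  have hftc := sl_ftc_aux hdv hgcont ha.1 ha.2 le_rfl
  rw [intervalIntegral.integral_of_le ha.2] at hftc
  have hsplit : ∫ s in Ioc (0:ℝ) 1, gφ s
      = (∫ s in Ioc 0 a, gφ s) + ∫ s in Ioc a 1, gφ s := by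
    rw [← setIntegral_union (Ioc_disjoint_Ioc_of_le le_rfl) measurableSet_Ioc
      (hint.mono_set (Ioc_subset_Ioc le_rfl ha.2))
      (hint.mono_set (Ioc_subset_Ioc ha.1.le le_rfl)),
      Ioc_union_Ioc_eq_Ioc ha.1.le ha.2]
  linear_combination hsplit + hftc

lemma sl_inv_cube_contOn {a b : ℝ} (ha : 0 < a) (hab : a ≤ b) :
    ContinuousOn (fun s : ℝ => (s ^ 3)⁻¹) (uIcc a b) := by
  apply (continuousOn_pow 3).inv₀
  intro x hx
  rw [uIcc_of_le hab] at hx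
  exact (pow_pos (lt_of_lt_of_le ha hx.1) 3).ne'

set_option maxHeartbeats 2000000 in
lemma sl_v0_zero
    (hdφ : ∀ s ∈ Ioc (0:ℝ) 1, HasDerivWithinAt φ (φ₁ s) (Ioc 0 1) s)
    (hφ₁cont : ContinuousOn φ₁ (Ioc 0 1))
    (hdv : ∀ s ∈ Ioc (0:ℝ) 1,
      HasDerivWithinAt (fun t : ℝ => (t:ℂ) ^ 3 * φ₁ t) (gφ s) (Ioc 0 1) s)
    (hgcont : ContinuousOn gφ (Ioc 0 1))
    (hintA : IntegrableOn (fun s => s ^ 3 * ‖φ s‖ ^ 2) (Ioc (0:ℝ) 1))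
    (hintV : IntegrableOn (fun s => (s ^ 3)⁻¹ * ‖gφ s‖ ^ 2) (Ioc (0:ℝ) 1)) :
    ((1:ℝ):ℂ) ^ 3 * φ₁ 1 - ∫ s in Ioc (0:ℝ) 1, gφ s = 0 := by
  set V1 : ℝ := ∫ s in Ioc (0:ℝ) 1, (s ^ 3)⁻¹ * ‖gφ s‖ ^ 2 with hV1
  set C₂ : ℝ := (1/4 + V1)/2 with hC₂
  have hV10 : 0 ≤ V1 := by
    apply setIntegral_nonneg measurableSet_Ioc
    intro s hs
    have : (0:ℝ) < s ^ 3 := pow_pos hs.1 3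
    positivity
  have hC₂0 : 0 < C₂ := by rw [hC₂]; linarith
  set v : ℝ → ℂ := fun s => (s:ℂ) ^ 3 * φ₁ s with hv
  set v₀ : ℂ := ((1:ℝ):ℂ) ^ 3 * φ₁ 1 - ∫ s in Ioc (0:ℝ) 1, gφ s with hv₀
  by_contra hne
  set ε : ℝ := ‖v₀‖ with hε
  have hε0 : 0 < ε := norm_pos_iff.mpr hne
  have hvnear : ∀ s ∈ Ioc (0:ℝ) 1, ‖v s - v₀‖ ≤ C₂ * s ^ 2 := by
    intro s hs
    have hd := sl_v_decomp hdv hgcont hintV hs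
    have heq : v s - v₀ = ∫ r in Ioc 0 s, gφ r := by
      rw [hv, hv₀]
      simp only
      rw [hd]
      ring
    rw [heq]
    calc ‖∫ r in Ioc 0 s, gφ r‖ ≤ ∫ r in Ioc 0 s, ‖gφ r‖ := norm_integral_le_integral_norm _
      _ ≤ C₂ * s ^ 2 := sl_G_bound hgcont hintV hs
  set δ : ℝ := min 1 (Real.sqrt (ε/(2*C₂))) with hδ
  have hδ0 : 0 < δ := lt_min one_pos (Real.sqrt_pos.mpr (by positivity))
  have hδ1 : δ ≤ 1 := min_le_left _ _
  have hδsq : C₂ * δ ^ 2 ≤ ε/2 := by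
    have h1 : δ ≤ Real.sqrt (ε/(2*C₂)) := min_le_right _ _
    have h2 : δ ^ 2 ≤ ε/(2*C₂) := by
      calc δ ^ 2 ≤ Real.sqrt (ε/(2*C₂)) ^ 2 := pow_le_pow_left₀ hδ0.le h1 2
        _ = ε/(2*C₂) := Real.sq_sqrt (by positivity)
    calc C₂ * δ ^ 2 ≤ C₂ * (ε/(2*C₂)) := by nlinarith
      _ = ε/2 := by field_simp
  have hφlb : ∀ a, 0 < a → a ≤ δ →
      (ε/4) * ((a ^ 2)⁻¹ - (δ ^ 2)⁻¹) - ‖φ δ‖ ≤ ‖φ a‖ := by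
    intro a ha0 haδ
    have hftc := sl_ftc_aux hdφ hφ₁cont ha0 haδ hδ1
    set κ : ℝ := ((a ^ 2)⁻¹ - (δ ^ 2)⁻¹)/2 with hκdef
    have hκ0 : 0 ≤ κ := by
      rw [hκdef]
      have : (δ ^ 2)⁻¹ ≤ (a ^ 2)⁻¹ :=
        inv_anti₀ (by positivity) (pow_le_pow_left₀ ha0.le haδ 2)
      linarith
    have heq : EqOn φ₁ (fun s => ((s ^ 3)⁻¹ : ℝ) • v₀ + ((s ^ 3)⁻¹ : ℝ) • (v s - v₀))
        (uIcc a δ) := by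
      intro s hs
      rw [uIcc_of_le haδ] at hs
      have hs0 : 0 < s := lt_of_lt_of_le ha0 hs.1
      have hs3 : ((s:ℂ)) ^ 3 ≠ 0 := pow_ne_zero _ (Complex.ofReal_ne_zero.mpr hs0.ne')
      have hkey : ((s ^ 3)⁻¹ : ℝ) • v s = φ₁ s := by
        rw [hv]
        simp only [Complex.real_smul, Complex.ofReal_inv, Complex.ofReal_pow]
        exact inv_mul_cancel_left₀ hs3 _
      simp only [smul_sub]
      rw [hkey]
      ring
    rw [integral_congr heq] at hftc
    have hvcont : ContinuousOn v (Ioc (0:ℝ) 1) := fun s hs => (hdv s (hs)).continuousWithinAt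
    have hsubuIcc : uIcc a δ ⊆ Ioc (0:ℝ) 1 := by
      rw [uIcc_of_le haδ]
      exact fun x hx => ⟨lt_of_lt_of_le ha0 hx.1, hx.2.trans hδ1⟩
    have hi1 : IntervalIntegrable (fun s : ℝ => ((s ^ 3)⁻¹ : ℝ) • v₀) volume a δ :=
      ContinuousOn.intervalIntegrable ((sl_inv_cube_contOn ha0 haδ).smul continuousOn_const)
    have hi2 : IntervalIntegrable (fun s : ℝ => ((s ^ 3)⁻¹ : ℝ) • (v s - v₀)) volume a δ :=
      ContinuousOn.intervalIntegrable ((sl_inv_cube_contOn ha0 haδ).smul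
        (((hvcont.mono hsubuIcc)).sub continuousOn_const))
    rw [integral_add hi1 hi2, intervalIntegral.integral_smul_const, sl_int_inv_cube ha0 haδ] at hftc
    have hE : ‖∫ s in a..δ, ((s ^ 3)⁻¹ : ℝ) • (v s - v₀)‖ ≤ κ * (ε/2) := by
      have hbd : ∀ᵐ t ∂volume.restrict (Set.uIoc a δ), ‖((t ^ 3)⁻¹ : ℝ) • (v t - v₀)‖
          ≤ (t ^ 3)⁻¹ * (ε/2) := by
        rw [uIoc_of_le haδ, ae_restrict_iff' measurableSet_Ioc]
        filter_upwards with t ht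
        have ht0 : 0 < t := ha0.trans ht.1
        rw [norm_smul, Real.norm_eq_abs, abs_of_pos (by positivity : (0:ℝ) < (t^3)⁻¹)]
        refine mul_le_mul_of_nonneg_left ?_ (by positivity)
        calc ‖v t - v₀‖ ≤ C₂ * t ^ 2 := hvnear t ⟨ht0, ht.2.trans hδ1⟩
          _ ≤ C₂ * δ ^ 2 := mul_le_mul_of_nonneg_left (pow_le_pow_left₀ ht0.le ht.2 2) hC₂0.le
          _ ≤ ε/2 := hδsq
      have hbi : IntervalIntegrable (fun t : ℝ => (t ^ 3)⁻¹ * (ε/2)) volume a δ :=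
        ContinuousOn.intervalIntegrable ((sl_inv_cube_contOn ha0 haδ).mul continuousOn_const)
      have hres := intervalIntegral.norm_integral_le_abs_of_norm_le hbd hbi
      rwa [intervalIntegral.integral_mul_const, sl_int_inv_cube ha0 haδ,
        abs_of_nonneg (by positivity : (0:ℝ) ≤ ((a ^ 2)⁻¹ - (δ ^ 2)⁻¹)/2 * (ε/2))] at hres
    have hκv : ‖(κ : ℝ) • v₀‖ = κ * ε := by
      rw [norm_smul, Real.norm_eq_abs, abs_of_nonneg hκ0, hε]
    have h2 : φ δ - φ a - κ • v₀ = ∫ s in a..δ, ((s ^ 3)⁻¹ : ℝ) • (v s - v₀) := by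
      rw [← hftc]; ring
    have h3 : ‖φ δ - φ a - κ • v₀‖ ≤ κ * (ε/2) := h2 ▸ hE
    have h5 : ‖κ • v₀‖ - ‖φ δ - φ a - κ • v₀‖ ≤ ‖φ δ - φ a‖ := by
      have hh := norm_sub_norm_le (κ • v₀) (φ δ - φ a)
      rw [norm_sub_rev (κ • v₀) (φ δ - φ a)] at hh
      linarith
    have h7 : ‖φ δ - φ a‖ ≤ ‖φ δ‖ + ‖φ a‖ := norm_sub_le _ _
    have h9 : κ * ε - κ * (ε/2) = (ε/4) * ((a ^ 2)⁻¹ - (δ ^ 2)⁻¹) := by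
      rw [hκdef]; ring
    linarith [hκv ▸ h5]
  -- choose a₀ and derive the 1/s lower bound
  set c₁ : ℝ := ε * (δ ^ 2)⁻¹/4 + ‖φ δ‖ + 1 with hc₁
  have hc₁0 : 0 < c₁ := by
    have h1 : (0:ℝ) ≤ ε * (δ ^ 2)⁻¹/4 := by positivity
    have h2 := norm_nonneg (φ δ)
    rw [hc₁]; linarith
  set a₀ : ℝ := min (δ/2) (Real.sqrt (ε/(8*c₁))) with ha₀def
  have ha₀0 : 0 < a₀ := lt_min (by linarith) (Real.sqrt_pos.mpr (by positivity))
  have ha₀δ : a₀ ≤ δ/2 := min_le_left _ _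
  have ha₀1 : a₀ ≤ 1 := by linarith
  have hlb : ∀ a, a ∈ Ioc 0 a₀ → (ε/8) * (a ^ 2)⁻¹ ≤ ‖φ a‖ := by
    intro a ha
    have ha0 : 0 < a := ha.1
    have haδ : a ≤ δ := le_trans (ha.2.trans ha₀δ) (by linarith)
    have h1 := hφlb a ha0 haδ
    have h2 : a ^ 2 ≤ ε/(8*c₁) := by
      calc a ^ 2 ≤ Real.sqrt (ε/(8*c₁)) ^ 2 :=
            pow_le_pow_left₀ ha0.le (ha.2.trans (min_le_right _ _)) 2
        _ = ε/(8*c₁) := Real.sq_sqrt (by positivity)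
    have h2' : a ^ 2 * (8 * c₁) ≤ ε := (le_div_iff₀ (by positivity)).mp h2
    have hpos : (0:ℝ) < (a ^ 2)⁻¹ := by positivity
    have hinv : a ^ 2 * (a ^ 2)⁻¹ = 1 := mul_inv_cancel₀ (by positivity)
    have h2'' : c₁ * a ^ 2 ≤ ε/8 := by
      have hmm := mul_le_mul_of_nonneg_left h2 hc₁0.le
      have he : c₁ * (ε/(8*c₁)) = ε/8 := by field_simp
      linarith [he ▸ hmm]
    have h3 : c₁ ≤ (ε/8) * (a ^ 2)⁻¹ := by
      have hprod : 0 ≤ (ε/8 - c₁ * a ^ 2) * (a ^ 2)⁻¹ := mul_nonneg (by linarith) hpos.le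
      have hinv2 : c₁ * (a ^ 2 * (a ^ 2)⁻¹) = c₁ := by rw [hinv, mul_one]
      nlinarith [hprod, hinv2]
    have h4 : (ε/4) * ((a ^ 2)⁻¹ - (δ ^ 2)⁻¹) - ‖φ δ‖
        = (ε/4) * (a ^ 2)⁻¹ - (c₁ - 1) := by
      rw [hc₁]; ring
    linarith
  -- final contradiction using non-integrability of 1/s
  set A : ℝ := ∫ s in Ioc (0:ℝ) 1, s ^ 3 * ‖φ s‖ ^ 2 with hA
  have hA0 : 0 ≤ A := setIntegral_nonneg measurableSet_Ioc (fun s hs => mul_nonneg (pow_nonneg hs.1.le 3) (sq_nonneg _))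
  set X : ℝ := 64/ε^2*(A+1) with hX
  have hX0 : 0 < X := by rw [hX]; positivity
  set a₁ : ℝ := a₀ * Real.exp (-X) with ha₁def
  have ha₁0 : 0 < a₁ := by rw [ha₁def]; positivity
  have ha₁a₀ : a₁ < a₀ := by
    rw [ha₁def]
    have hexp : Real.exp (-X) < 1 := Real.exp_lt_one_iff.mpr (by linarith)
    nlinarith
  have hsubset : Ioc a₁ a₀ ⊆ Ioc (0:ℝ) 1 := Ioc_subset_Ioc ha₁0.le ha₀1
  have hinvint : IntegrableOn (fun s : ℝ => (ε/8)^2 * s⁻¹) (Ioc a₁ a₀) := by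
    apply IntegrableOn.mono_set _ Ioc_subset_Icc_self
    apply ContinuousOn.integrableOn_compact isCompact_Icc
    apply continuousOn_const.mul
    apply ContinuousOn.inv₀ continuousOn_id
    intro x hx
    exact (ha₁0.trans_le hx.1).ne'
  have hlow : ∫ s in Ioc a₁ a₀, (ε/8)^2 * s⁻¹ ≤ ∫ s in Ioc a₁ a₀, s ^ 3 * ‖φ s‖ ^ 2 := by
    apply setIntegral_mono_on hinvint (hintA.mono_set hsubset) measurableSet_Ioc
    intro s hs
    have hs0 : 0 < s := ha₁0.trans hs.1
    have hmem : s ∈ Ioc 0 a₀ := ⟨hs0, hs.2⟩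
    have h1 := hlb s hmem
    have h2 : ((ε/8) * (s ^ 2)⁻¹) ^ 2 ≤ ‖φ s‖ ^ 2 :=
      pow_le_pow_left₀ (by positivity) h1 2
    have h3 : s ^ 3 * ((ε/8) * (s ^ 2)⁻¹) ^ 2 = (ε/8)^2 * s⁻¹ := by
      field_simp
    calc (ε/8)^2 * s⁻¹ = s ^ 3 * ((ε/8) * (s ^ 2)⁻¹) ^ 2 := h3.symm
      _ ≤ s ^ 3 * ‖φ s‖ ^ 2 := by
          apply mul_le_mul_of_nonneg_left h2 (by positivity)
  have hup : ∫ s in Ioc a₁ a₀, s ^ 3 * ‖φ s‖ ^ 2 ≤ A := by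
    apply setIntegral_mono_set hintA _ (HasSubset.Subset.eventuallyLE hsubset)
    filter_upwards [ae_restrict_mem measurableSet_Ioc] with s hs
    exact mul_nonneg (pow_nonneg hs.1.le 3) (sq_nonneg _)
  have hlogint : ∫ s in Ioc a₁ a₀, s⁻¹ = X := by
    rw [← intervalIntegral.integral_of_le ha₁a₀.le]
    rw [integral_inv (by
      rw [uIcc_of_le ha₁a₀.le]
      intro hmem
      exact absurd hmem.1 (not_le.mpr ha₁0))]
    have hq : a₀ / a₁ = Real.exp X := by
      rw [ha₁def, Real.exp_neg]
      rw [div_eq_iff (by positivity : a₀ * (Real.exp X)⁻¹ ≠ 0)]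
      field_simp
    rw [hq, Real.log_exp]
  have hT : ∫ s in Ioc a₁ a₀, (ε/8)^2 * s⁻¹ = A + 1 := by
    rw [MeasureTheory.integral_const_mul, hlogint, hX]
    field_simp
    ring
  linarith

set_option maxHeartbeats 2000000 in
lemma sl_W_tendsto
    (hdφ : ∀ s ∈ Ioc (0:ℝ) 1, HasDerivWithinAt φ (φ₁ s) (Ioc 0 1) s)
    (hφ₁cont : ContinuousOn φ₁ (Ioc 0 1))
    (hdv : ∀ s ∈ Ioc (0:ℝ) 1,
      HasDerivWithinAt (fun t : ℝ => (t:ℂ) ^ 3 * φ₁ t) (gφ s) (Ioc 0 1) s)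
    (hgcont : ContinuousOn gφ (Ioc 0 1))
    (hintA : IntegrableOn (fun s => s ^ 3 * ‖φ s‖ ^ 2) (Ioc (0:ℝ) 1))
    (hintV : IntegrableOn (fun s => (s ^ 3)⁻¹ * ‖gφ s‖ ^ 2) (Ioc (0:ℝ) 1)) :
    Tendsto (fun n : ℕ => ((((n:ℝ)+2)⁻¹ : ℝ):ℂ) ^ 3 * φ₁ (((n:ℝ)+2)⁻¹)
      * (starRingEnd ℂ) (φ (((n:ℝ)+2)⁻¹))) atTop (𝓝 0) := by
  set V1 : ℝ := ∫ s in Ioc (0:ℝ) 1, (s ^ 3)⁻¹ * ‖gφ s‖ ^ 2 with hV1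
  set C₂ : ℝ := (1/4 + V1)/2 with hC₂
  have hV10 : 0 ≤ V1 := by
    apply setIntegral_nonneg measurableSet_Ioc
    intro s hs
    have : (0:ℝ) < s ^ 3 := pow_pos hs.1 3
    positivity
  have hC₂0 : 0 < C₂ := by rw [hC₂]; linarith
  have hv0 := sl_v0_zero hdφ hφ₁cont hdv hgcont hintA hintV
  have hvb : ∀ a, a ∈ Ioc (0:ℝ) 1 → ‖(a:ℂ) ^ 3 * φ₁ a‖ ≤ C₂ * a ^ 2 := by
    intro a ha
    have hd := sl_v_decomp hdv hgcont hintV ha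
    rw [hv0, zero_add] at hd
    rw [hd]
    calc ‖∫ s in Ioc 0 a, gφ s‖ ≤ ∫ s in Ioc 0 a, ‖gφ s‖ := norm_integral_le_integral_norm _
      _ ≤ C₂ * a ^ 2 := sl_G_bound hgcont hintV ha
  have hφb : ∀ a, a ∈ Ioc (0:ℝ) 1 → ‖φ a‖ ≤ ‖φ 1‖ + C₂ * (-Real.log a) := by
    intro a ha
    have hftc := sl_ftc_aux hdφ hφ₁cont ha.1 ha.2 le_rfl
    have hbd : ∀ᵐ t ∂volume.restrict (Set.uIoc a 1), ‖φ₁ t‖ ≤ C₂ * t⁻¹ := by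
      rw [uIoc_of_le ha.2, ae_restrict_iff' measurableSet_Ioc]
      filter_upwards with t ht
      have ht0 : 0 < t := ha.1.trans ht.1
      have htIoc : t ∈ Ioc (0:ℝ) 1 := ⟨ht0, ht.2⟩
      have ht3 : ((t:ℂ)) ^ 3 ≠ 0 := pow_ne_zero _ (Complex.ofReal_ne_zero.mpr ht0.ne')
      have hrw : φ₁ t = ((t:ℂ) ^ 3)⁻¹ * ((t:ℂ) ^ 3 * φ₁ t) := (inv_mul_cancel_left₀ ht3 _).symm
      rw [hrw, norm_mul, norm_inv, norm_pow, Complex.norm_real, Real.norm_eq_abs,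
        abs_of_pos ht0]
      have h1 : ‖(t:ℂ) ^ 3 * φ₁ t‖ ≤ C₂ * t ^ 2 := hvb t htIoc
      have h2 : (t ^ 3)⁻¹ * (C₂ * t ^ 2) = C₂ * t⁻¹ := by
        field_simp
      calc (t ^ 3)⁻¹ * ‖(t:ℂ) ^ 3 * φ₁ t‖ ≤ (t ^ 3)⁻¹ * (C₂ * t ^ 2) :=
            mul_le_mul_of_nonneg_left h1 (by positivity)
        _ = C₂ * t⁻¹ := h2
    have hbi : IntervalIntegrable (fun t : ℝ => C₂ * t⁻¹) volume a 1 := by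
      apply ContinuousOn.intervalIntegrable
      apply continuousOn_const.mul
      apply ContinuousOn.inv₀ continuousOn_id
      intro x hx
      rw [uIcc_of_le ha.2] at hx
      exact (ha.1.trans_le hx.1).ne'
    have hval : ∫ t in a..1, C₂ * t⁻¹ = C₂ * (-Real.log a) := by
      rw [intervalIntegral.integral_const_mul, integral_inv (by
        rw [uIcc_of_le ha.2]
        intro hmem
        exact absurd hmem.1 (not_le.mpr ha.1))]
      rw [one_div, Real.log_inv]
    have hn := intervalIntegral.norm_integral_le_abs_of_norm_le hbd hbi
    rw [hftc, hval, abs_of_nonneg (by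
      have := Real.log_nonpos ha.1.le ha.2
      nlinarith)] at hn
    calc ‖φ a‖ = ‖φ 1 - (φ 1 - φ a)‖ := by ring_nf
      _ ≤ ‖φ 1‖ + ‖φ 1 - φ a‖ := norm_sub_le _ _
      _ ≤ ‖φ 1‖ + C₂ * (-Real.log a) := by linarith
  -- now the sequence bound
  have hbound : ∀ n : ℕ, ‖((((n:ℝ)+2)⁻¹ : ℝ):ℂ) ^ 3 * φ₁ (((n:ℝ)+2)⁻¹)
      * (starRingEnd ℂ) (φ (((n:ℝ)+2)⁻¹))‖
      ≤ (C₂ * ‖φ 1‖ + C₂ ^ 2) * ((n:ℝ)+2)⁻¹ := by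
    intro n
    set a : ℝ := ((n:ℝ)+2)⁻¹ with hadef
    have hn2 : (1:ℝ) ≤ (n:ℝ) + 2 := by
      have : (0:ℝ) ≤ n := Nat.cast_nonneg n
      linarith
    have ha0 : 0 < a := by rw [hadef]; positivity
    have ha1 : a ≤ 1 := by
      rw [hadef]
      exact inv_le_one_of_one_le₀ hn2
    have haIoc : a ∈ Ioc (0:ℝ) 1 := ⟨ha0, ha1⟩
    have hWnorm : ‖(a:ℂ) ^ 3 * φ₁ a * (starRingEnd ℂ) (φ a)‖
        = ‖(a:ℂ) ^ 3 * φ₁ a‖ * ‖φ a‖ := by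
      rw [norm_mul, RCLike.norm_conj]
    rw [hWnorm]
    set L : ℝ := Real.log ((n:ℝ)+2) with hLdef
    have hL0 : 0 ≤ L := Real.log_nonneg hn2
    have hLle : L ≤ (n:ℝ) + 2 := by
      have := Real.log_le_sub_one_of_pos (by linarith : (0:ℝ) < (n:ℝ)+2)
      linarith
    have hloga : -Real.log a = L := by
      rw [hadef, Real.log_inv, hLdef, neg_neg]
    have h1 : ‖(a:ℂ) ^ 3 * φ₁ a‖ ≤ C₂ * a ^ 2 := hvb a haIoc
    have h2 : ‖φ a‖ ≤ ‖φ 1‖ + C₂ * L := by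
      have := hφb a haIoc
      rwa [hloga] at this
    have h3 : ‖(a:ℂ) ^ 3 * φ₁ a‖ * ‖φ a‖ ≤ (C₂ * a ^ 2) * (‖φ 1‖ + C₂ * L) :=
      mul_le_mul h1 h2 (norm_nonneg _) (by positivity)
    have hkey : a ^ 2 * ((n:ℝ)+2) = a := by
      rw [hadef]
      have hne : ((n:ℝ)+2) ≠ 0 := by positivity
      field_simp
    have ha2a : a ^ 2 ≤ a := by nlinarith
    have haL : a ^ 2 * L ≤ a := by
      calc a ^ 2 * L ≤ a ^ 2 * ((n:ℝ)+2) := by nlinarith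
        _ = a := hkey
    have hfin : (C₂ * a ^ 2) * (‖φ 1‖ + C₂ * L) ≤ (C₂ * ‖φ 1‖ + C₂ ^ 2) * a := by
      nlinarith [mul_le_mul_of_nonneg_left ha2a (mul_nonneg hC₂0.le (norm_nonneg (φ 1))),
        mul_le_mul_of_nonneg_left haL (sq_nonneg C₂)]
    linarith
  have hx : Tendsto (fun n : ℕ => ((n:ℝ)+2)⁻¹) atTop (𝓝 0) :=
    tendsto_inv_atTop_zero.comp
      (tendsto_atTop_add_const_right atTop 2 tendsto_natCast_atTop_atTop)
  have hgt : Tendsto (fun n : ℕ => (C₂ * ‖φ 1‖ + C₂ ^ 2) * ((n:ℝ)+2)⁻¹) atTop (𝓝 0) := by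
    simpa using hx.const_mul (C₂ * ‖φ 1‖ + C₂ ^ 2)
  exact squeeze_zero_norm hbound hgt
end

lemma sl_mul_conj (z : ℂ) : z * (starRingEnd ℂ) z = ((‖z‖^2 : ℝ) : ℂ) := by
  rw [Complex.mul_conj]
  norm_cast
  rw [Complex.normSq_eq_norm_sq]

set_option maxHeartbeats 2000000 in
/-- Under the condition `h > M := sup_{(0,1)} max(-q, 0)`, any nonzero
eigenfunction `φ` with eigenvalue `μ` of the singular Sturm–Liouville problem
`-d⁻² s⁻³ (s³ φ')' + q φ = μ φ` with boundary condition `-g φ'(1) - h φ(1) = μ φ(1)`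
satisfies `φ(1) ≠ 0`, `μ` is real, and `(μ + M)[u,u] > 0`, where
`[u,u] = d² ∫₀¹ s³ |φ|² - g⁻¹ |φ(1)|²`. -/
theorem eigenvalues_real_and_eigenvectors_not_neutral
    (d g h M : ℝ) (hd : 0 < d) (hg : 0 < g)
    (q : ℝ → ℝ) (hq_meas : Measurable q) (hq_bdd : ∃ C, ∀ s ∈ Ioo (0:ℝ) 1, |q s| ≤ C)
    (hM : IsLUB ((fun s => max (-q s) 0) '' Ioo (0:ℝ) 1) M)
    (hhM : M < h)
    (μ : ℂ) (φ φ₁ gφ : ℝ → ℂ) (hφ : MemDomT φ φ₁ gφ)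
    (hφne : ∃ s ∈ Ioc (0:ℝ) 1, φ s ≠ 0)
    (hode : ∀ s ∈ Ioo (0:ℝ) 1,
      -(((d:ℂ) ^ 2)⁻¹ * ((s:ℂ) ^ 3)⁻¹ * gφ s) + (q s : ℂ) * φ s = μ * φ s)
    (hbc : -((g:ℂ) * φ₁ 1) - (h:ℂ) * φ 1 = μ * φ 1) :
    φ 1 ≠ 0 ∧ μ.im = 0 ∧
    0 < (μ.re + M) *
      (d ^ 2 * (∫ s in Ioc (0:ℝ) 1, s ^ 3 * ‖φ s‖ ^ 2) - g⁻¹ * ‖φ 1‖ ^ 2) := by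
  obtain ⟨hdφ, hφ₁cont, hdv, hgcont, hintA, hintV⟩ := hφ
  obtain ⟨C, hC⟩ := hq_bdd
  have hdC : ((d:ℂ)) ^ 2 ≠ 0 := pow_ne_zero _ (Complex.ofReal_ne_zero.mpr hd.ne')
  have hgC : ((g:ℂ)) ≠ 0 := Complex.ofReal_ne_zero.mpr hg.ne'
  have hφcont : ContinuousOn φ (Ioc 0 1) := fun s hs => (hdφ s hs).continuousWithinAt
  -- rearranged ODE
  have hodeg : ∀ s ∈ Ioo (0:ℝ) 1, gφ s = (d:ℂ)^2 * (s:ℂ)^3 * ((q s : ℂ) - μ) * φ s := by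
    intro s hs
    have hsC : ((s:ℂ)) ^ 3 ≠ 0 := pow_ne_zero _ (Complex.ofReal_ne_zero.mpr hs.1.ne')
    have h1 := hode s hs
    field_simp at h1
    have hx : gφ s / ((d:ℂ) ^ 2 * (s:ℂ) ^ 3) * ((d:ℂ) ^ 2 * (s:ℂ) ^ 3) = gφ s :=
      div_mul_cancel₀ _ (mul_ne_zero hdC hsC)
    linear_combination (-((d:ℂ) ^ 2 * (s:ℂ) ^ 3)) * h1 - hx
  -- φ 1 ≠ 0
  have hφ1ne : φ 1 ≠ 0 := by
    intro h0
    have h1' : φ₁ 1 = 0 := by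
      rw [h0] at hbc
      simp only [mul_zero, sub_zero] at hbc
      have : (g:ℂ) * φ₁ 1 = 0 := by linear_combination -hbc
      exact (mul_eq_zero.mp this).resolve_left hgC
    obtain ⟨s₀, hs₀, hφs₀⟩ := hφne
    rcases eq_or_lt_of_le hs₀.2 with heq | hlt
    · exact hφs₀ (heq ▸ h0)
    · exact hφs₀ (sl_vanish d hd μ q hC hdφ hdv hodeg h0 h1' ⟨hs₀.1, hlt⟩)
  -- notation
  set A : ℝ := ∫ s in Ioc (0:ℝ) 1, s ^ 3 * ‖φ s‖ ^ 2 with hA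
  set N : ℝ := ‖φ 1‖ ^ 2 with hN
  have hN0 : 0 < N := by
    rw [hN]
    exact pow_pos (norm_pos_iff.mpr hφ1ne) 2
  set C' : ℝ := max C |q 1| with hC'
  have hqIoc : ∀ s ∈ Ioc (0:ℝ) 1, |q s| ≤ C' := by
    intro s hs
    rcases eq_or_lt_of_le hs.2 with heq | hlt
    · rw [heq]; exact le_max_right _ _
    · exact le_trans (hC s ⟨hs.1, hlt⟩) (le_max_left _ _)
  -- integrability of q * weight
  have hXcont : ContinuousOn (fun s : ℝ => s ^ 3 * ‖φ s‖ ^ 2) (Ioc 0 1) :=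
    (continuous_pow 3).continuousOn.mul (hφcont.norm.pow 2)
  have hXnn : ∀ s ∈ Ioc (0:ℝ) 1, 0 ≤ s ^ 3 * ‖φ s‖ ^ 2 := fun s hs =>
    mul_nonneg (pow_nonneg hs.1.le 3) (sq_nonneg _)
  have hintQ : IntegrableOn (fun s => q s * (s ^ 3 * ‖φ s‖ ^ 2)) (Ioc (0:ℝ) 1) := by
    apply Integrable.mono' (hintA.const_mul C')
    · exact (hq_meas.aestronglyMeasurable.restrict).mul
        (hXcont.aestronglyMeasurable measurableSet_Ioc)
    · rw [ae_restrict_iff' measurableSet_Ioc]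
      filter_upwards with s hs
      rw [Real.norm_eq_abs, abs_mul]
      calc |q s| * |s ^ 3 * ‖φ s‖ ^ 2| ≤ C' * |s ^ 3 * ‖φ s‖ ^ 2| :=
            mul_le_mul_of_nonneg_right (hqIoc s hs) (abs_nonneg _)
        _ = C' * (s ^ 3 * ‖φ s‖ ^ 2) := by rw [abs_of_nonneg (hXnn s hs)]
  set Q : ℝ := ∫ s in Ioc (0:ℝ) 1, q s * (s ^ 3 * ‖φ s‖ ^ 2) with hQ
  -- a.e. membership in Ioo
  have haeIoo : ∀ᵐ s ∂volume.restrict (Ioc (0:ℝ) 1), s ∈ Ioo (0:ℝ) 1 := by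
    have h1 : ∀ᵐ s : ℝ ∂volume, s ≠ 1 := by
      rw [ae_iff]
      have : {s : ℝ | ¬ s ≠ 1} = {1} := by ext x; simp
      rw [this]
      exact measure_singleton 1
    filter_upwards [ae_restrict_mem measurableSet_Ioc, ae_restrict_of_ae h1] with s hs hs1
    exact ⟨hs.1, lt_of_le_of_ne hs.2 hs1⟩
  -- integrability of gφ * conj φ
  have hgscont : ContinuousOn (fun s => gφ s * (starRingEnd ℂ) (φ s)) (Ioc (0:ℝ) 1) := by
    apply hgcont.mul
    exact fun s hs => (hφcont s hs).star
  have hintGS : IntegrableOn (fun s => gφ s * (starRingEnd ℂ) (φ s)) (Ioc (0:ℝ) 1) := by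
    apply Integrable.mono' (hintA.const_mul (d^2 * (C' + ‖μ‖)))
    · exact hgscont.aestronglyMeasurable measurableSet_Ioc
    · filter_upwards [haeIoo] with s hs
      rw [norm_mul, RCLike.norm_conj, hodeg s hs]
      have e1 : ‖(d:ℂ) ^ 2 * (s:ℂ) ^ 3 * ((q s : ℂ) - μ) * φ s‖
          = d ^ 2 * s ^ 3 * ‖(q s : ℂ) - μ‖ * ‖φ s‖ := by
        rw [norm_mul, norm_mul, norm_mul, norm_pow, norm_pow, Complex.norm_real,
          Complex.norm_real, Real.norm_eq_abs, Real.norm_eq_abs, abs_of_pos hd,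
          abs_of_pos hs.1]
      rw [e1]
      have h5 : ‖(q s : ℂ) - μ‖ ≤ C' + ‖μ‖ :=
        calc ‖(q s : ℂ) - μ‖ ≤ ‖(q s : ℂ)‖ + ‖μ‖ := norm_sub_le _ _
          _ ≤ C' + ‖μ‖ := by
              rw [Complex.norm_real, Real.norm_eq_abs]
              exact add_le_add_left (hqIoc s ⟨hs.1, hs.2.le⟩) _
      have h6 : s ^ 3 ≤ 1 := by
        calc s ^ 3 ≤ 1 ^ 3 := pow_le_pow_left₀ hs.1.le hs.2.le 3
          _ = 1 := one_pow 3
      have hrhs : d ^ 2 * (C' + ‖μ‖) * (s ^ 3 * ‖φ s‖ ^ 2)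
          = (d ^ 2 * (C' + ‖μ‖) * s ^ 3 * ‖φ s‖) * ‖φ s‖ := by ring
      calc d ^ 2 * s ^ 3 * ‖(q s : ℂ) - μ‖ * ‖φ s‖ * ‖φ s‖
          ≤ d ^ 2 * (C' + ‖μ‖) * s ^ 3 * ‖φ s‖ * ‖φ s‖ := by
            apply mul_le_mul_of_nonneg_right _ (norm_nonneg _)
            apply mul_le_mul_of_nonneg_right _ (norm_nonneg _)
            have hb : (0:ℝ) ≤ d ^ 2 * s ^ 3 := mul_nonneg (sq_nonneg d) (pow_nonneg hs.1.le 3)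
            nlinarith [mul_le_mul_of_nonneg_left h5 hb]
        _ = d ^ 2 * (C' + ‖μ‖) * (s ^ 3 * ‖φ s‖ ^ 2) := by ring
      -- note : goal shape may differ; fix later
  -- parts identity for each a in Ioc 0 1
  have hIca : ∀ {a : ℝ}, a ∈ Ioc (0:ℝ) 1 → Icc a 1 ⊆ Ioc (0:ℝ) 1 :=
    fun {a} ha x hx => ⟨lt_of_lt_of_le ha.1 hx.1, hx.2⟩
  have hvφ₁cont : ContinuousOn
      (fun s : ℝ => (s:ℂ)^3 * φ₁ s * (starRingEnd ℂ) (φ₁ s)) (Ioc (0:ℝ) 1) := by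
    apply ContinuousOn.mul
    · exact ((Complex.continuous_ofReal.pow 3).continuousOn).mul hφ₁cont
    · exact fun s hs => (hφ₁cont s hs).star
  have hparts : ∀ a ∈ Ioc (0:ℝ) 1,
      (∫ s in Ioc a 1, gφ s * (starRingEnd ℂ) (φ s))
        + ∫ s in Ioc a 1, (s:ℂ)^3 * φ₁ s * (starRingEnd ℂ) (φ₁ s)
      = φ₁ 1 * (starRingEnd ℂ) (φ 1) - (a:ℂ)^3 * φ₁ a * (starRingEnd ℂ) (φ a) := by
    intro a ha
    have hder : ∀ s ∈ Ioc (0:ℝ) 1, HasDerivWithinAt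
        (fun t : ℝ => (t:ℂ)^3 * φ₁ t * (starRingEnd ℂ) (φ t))
        (gφ s * (starRingEnd ℂ) (φ s) + (s:ℂ)^3 * φ₁ s * (starRingEnd ℂ) (φ₁ s))
        (Ioc 0 1) s := by
      intro s hs
      exact (hdv s hs).mul ((hdφ s hs).star)
    have hcont' : ContinuousOn (fun s => gφ s * (starRingEnd ℂ) (φ s)
        + (s:ℂ)^3 * φ₁ s * (starRingEnd ℂ) (φ₁ s)) (Ioc (0:ℝ) 1) :=
      hgscont.add hvφ₁cont
    have hftc := sl_ftc_aux hder hcont' ha.1 ha.2 le_rfl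
    rw [intervalIntegral.integral_of_le ha.2] at hftc
    have hi1 : IntegrableOn (fun s => gφ s * (starRingEnd ℂ) (φ s)) (Ioc a 1) :=
      ((hgscont.mono (hIca ha)).integrableOn_compact isCompact_Icc).mono_set
        Ioc_subset_Icc_self
    have hi2 : IntegrableOn (fun s : ℝ => (s:ℂ)^3 * φ₁ s * (starRingEnd ℂ) (φ₁ s))
        (Ioc a 1) :=
      ((hvφ₁cont.mono (hIca ha)).integrableOn_compact isCompact_Icc).mono_set
        Ioc_subset_Icc_self
    rw [integral_add hi1 hi2] at hftc
    rw [hftc]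
    norm_num
  -- the second integrand is a real function
  have hJfun : (fun s : ℝ => (s:ℂ)^3 * φ₁ s * (starRingEnd ℂ) (φ₁ s))
      = fun s : ℝ => ((s^3 * ‖φ₁ s‖^2 : ℝ) : ℂ) := by
    funext s
    rw [mul_assoc, sl_mul_conj]
    push_cast
    ring
  -- limits along u n = (n+2)⁻¹
  set Iinf : ℂ := ∫ s in Ioc (0:ℝ) 1, gφ s * (starRingEnd ℂ) (φ s) with hIinf
  have hIlim : Tendsto (fun n : ℕ => ∫ s in Ioc (((n:ℝ)+2)⁻¹) 1,
      gφ s * (starRingEnd ℂ) (φ s)) atTop (𝓝 Iinf) := sl_tendsto_setIntegral hintGS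
  have hWlim := sl_W_tendsto hdφ hφ₁cont hdv hgcont hintA hintV
  have hu01 : ∀ n : ℕ, (((n:ℝ)+2)⁻¹) ∈ Ioc (0:ℝ) 1 := by
    intro n
    have hn0 : (0:ℝ) ≤ n := Nat.cast_nonneg n
    constructor
    · positivity
    · apply inv_le_one_of_one_le₀
      linarith
  set J : ℕ → ℝ := fun n => ∫ s in Ioc (((n:ℝ)+2)⁻¹) 1, s^3 * ‖φ₁ s‖^2 with hJ
  have hJid : ∀ n : ℕ, ((J n : ℝ) : ℂ)
      = φ₁ 1 * (starRingEnd ℂ) (φ 1)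
        - ((((n:ℝ)+2)⁻¹ : ℝ):ℂ)^3 * φ₁ (((n:ℝ)+2)⁻¹)
          * (starRingEnd ℂ) (φ (((n:ℝ)+2)⁻¹))
        - ∫ s in Ioc (((n:ℝ)+2)⁻¹) 1, gφ s * (starRingEnd ℂ) (φ s) := by
    intro n
    have hp := hparts _ (hu01 n)
    have hval : ∫ s in Ioc (((n:ℝ)+2)⁻¹) 1, (s:ℂ)^3 * φ₁ s * (starRingEnd ℂ) (φ₁ s)
        = ((J n : ℝ) : ℂ) := by
      rw [hJfun, hJ]
      exact integral_ofReal
    rw [hval] at hp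
    linear_combination hp
  set Lc : ℂ := φ₁ 1 * (starRingEnd ℂ) (φ 1) - 0 - Iinf with hLc
  have hJtendC : Tendsto (fun n : ℕ => ((J n : ℝ) : ℂ)) atTop (𝓝 Lc) := by
    rw [funext hJid]
    exact (tendsto_const_nhds.sub hWlim).sub hIlim
  set B : ℝ := Lc.re with hB
  have hJtendR : Tendsto J atTop (𝓝 B) := by
    have := (Complex.continuous_re.tendsto Lc).comp hJtendC
    simpa [Function.comp_def] using this
  have hJnn : ∀ n : ℕ, 0 ≤ J n := by
    intro n
    apply setIntegral_nonneg measurableSet_Ioc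
    intro s hs
    have hs0 : 0 < s := lt_trans (hu01 n).1 hs.1
    positivity
  have hB0 : 0 ≤ B := ge_of_tendsto hJtendR (Eventually.of_forall hJnn)
  have hLcim : Lc.im = 0 := by
    have h1 := (Complex.continuous_im.tendsto Lc).comp hJtendC
    have h1' : Tendsto (fun _ : ℕ => (0:ℝ)) atTop (𝓝 Lc.im) := by
      apply h1.congr
      intro n
      simp [Function.comp]
    exact tendsto_nhds_unique h1' tendsto_const_nhds
  have hLceq : Lc = ((B : ℝ) : ℂ) := by
    apply Complex.ext
    · simp [hB]
    · simp [hLcim]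
  -- evaluate Iinf
  have hIval : Iinf = ((d^2 * Q : ℝ) : ℂ) - μ * ((d^2 * A : ℝ) : ℂ) := by
    rw [hIinf, integral_Ioc_eq_integral_Ioo]
    have hcongr : ∫ s in Ioo (0:ℝ) 1, gφ s * (starRingEnd ℂ) (φ s)
        = ∫ s in Ioo (0:ℝ) 1, (((d^2 * (q s * (s^3 * ‖φ s‖^2)) : ℝ) : ℂ)
            - μ * ((d^2 * (s^3 * ‖φ s‖^2) : ℝ) : ℂ)) := by
      apply setIntegral_congr_fun measurableSet_Ioo
      intro s hs
      have hzz := sl_mul_conj (φ s)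
      calc gφ s * (starRingEnd ℂ) (φ s)
          = ((d:ℂ)^2 * (s:ℂ)^3 * ((q s : ℂ) - μ)) * (φ s * (starRingEnd ℂ) (φ s)) := by
            rw [hodeg s hs]; ring
        _ = ((d:ℂ)^2 * (s:ℂ)^3 * ((q s : ℂ) - μ)) * ((‖φ s‖^2 : ℝ) : ℂ) := by rw [hzz]
        _ = ((d^2 * (q s * (s^3 * ‖φ s‖^2)) : ℝ) : ℂ)
            - μ * ((d^2 * (s^3 * ‖φ s‖^2) : ℝ) : ℂ) := by push_cast; ring
    rw [hcongr]
    have hq2 : IntegrableOn (fun s => d^2 * (q s * (s^3 * ‖φ s‖^2))) (Ioc (0:ℝ) 1) :=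
      hintQ.const_mul (d^2)
    have ha2 : IntegrableOn (fun s : ℝ => d^2 * (s^3 * ‖φ s‖^2)) (Ioc (0:ℝ) 1) :=
      hintA.const_mul (d^2)
    have hif1 : IntegrableOn (fun s : ℝ => ((d^2 * (q s * (s^3 * ‖φ s‖^2)) : ℝ) : ℂ))
        (Ioo (0:ℝ) 1) :=
      (hq2.mono_set Ioo_subset_Ioc_self).ofReal
    have hif2 : IntegrableOn (fun s : ℝ => μ * ((d^2 * (s^3 * ‖φ s‖^2) : ℝ) : ℂ))
        (Ioo (0:ℝ) 1) :=
      ((ha2.mono_set Ioo_subset_Ioc_self).ofReal).const_mul μ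
    have e0 : ∫ a in Ioo (0:ℝ) 1, ((d^2 * (q a * (a^3 * ‖φ a‖^2)) : ℝ) : ℂ)
        = ((∫ a in Ioo (0:ℝ) 1, d^2 * (q a * (a^3 * ‖φ a‖^2)) : ℝ) : ℂ) :=
      integral_ofReal
    have e0' : ∫ a in Ioo (0:ℝ) 1, ((d^2 * (a^3 * ‖φ a‖^2) : ℝ) : ℂ)
        = ((∫ a in Ioo (0:ℝ) 1, d^2 * (a^3 * ‖φ a‖^2) : ℝ) : ℂ) :=
      integral_ofReal
    rw [integral_sub hif1 hif2, MeasureTheory.integral_const_mul, e0, e0']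
    have e1 : ∫ s in Ioo (0:ℝ) 1, d^2 * (q s * (s^3 * ‖φ s‖^2)) = d^2 * Q := by
      rw [MeasureTheory.integral_const_mul, hQ, integral_Ioc_eq_integral_Ioo]
    have e2 : ∫ s in Ioo (0:ℝ) 1, d^2 * (s^3 * ‖φ s‖^2) = d^2 * A := by
      rw [MeasureTheory.integral_const_mul, hA, integral_Ioc_eq_integral_Ioo]
    rw [e1, e2]
  -- main complex identity
  have hE : φ₁ 1 * (starRingEnd ℂ) (φ 1)
      = ((d^2 * Q : ℝ) : ℂ) - μ * ((d^2 * A : ℝ) : ℂ) + ((B : ℝ) : ℂ) := by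
    have := hLceq
    rw [hLc] at this
    rw [← hIval]
    linear_combination this
  -- boundary condition identity
  have hBCeq : φ₁ 1 * (starRingEnd ℂ) (φ 1)
      = -((g:ℝ)⁻¹ : ℝ) * ((h:ℂ) + μ) * ((N : ℝ) : ℂ) := by
    have hphi1 : (g:ℂ) * φ₁ 1 = -((h:ℂ) + μ) * φ 1 := by linear_combination -hbc
    have hNeq : φ 1 * (starRingEnd ℂ) (φ 1) = ((N : ℝ) : ℂ) := by
      rw [sl_mul_conj, hN]
    have : (g:ℂ) * (φ₁ 1 * (starRingEnd ℂ) (φ 1))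
        = (g:ℂ) * (-((g:ℝ)⁻¹ : ℝ) * ((h:ℂ) + μ) * ((N : ℝ) : ℂ)) := by
      push_cast
      rw [show ((g:ℂ)) * (φ₁ 1 * (starRingEnd ℂ) (φ 1))
        = ((g:ℂ) * φ₁ 1) * (starRingEnd ℂ) (φ 1) from by ring, hphi1]
      field_simp
      linear_combination (-((h:ℂ)+μ)) * hNeq
    exact mul_left_cancel₀ hgC this
  set P : ℝ := d^2 * A - g⁻¹ * N with hP
  set R : ℝ := d^2 * Q + B + g⁻¹ * h * N with hR
  have hkey : μ * ((P : ℝ) : ℂ) = ((R : ℝ) : ℂ) := by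
    rw [hP, hR]
    push_cast
    have h9 := hBCeq.symm.trans hE
    push_cast at h9
    linear_combination h9
  have him' : μ.im * P = 0 := by
    have h1 := congrArg Complex.im hkey
    simpa [Complex.mul_im] using h1
  have hre' : μ.re * P = R := by
    have h2 := congrArg Complex.re hkey
    simpa [Complex.mul_re] using h2
  -- positivity
  have hQMA : 0 ≤ Q + M * A := by
    have hsum : Q + M * A = ∫ s in Ioc (0:ℝ) 1,
        (q s * (s^3 * ‖φ s‖^2) + M * (s^3 * ‖φ s‖^2)) := by
      rw [integral_add hintQ (hintA.const_mul M), hQ, hA, MeasureTheory.integral_const_mul]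
    rw [hsum, integral_Ioc_eq_integral_Ioo]
    apply setIntegral_nonneg measurableSet_Ioo
    intro s hs
    have hqM : -q s ≤ M := le_trans (le_max_left _ _) (hM.1 ⟨s, hs, rfl⟩)
    have hX : 0 ≤ s^3 * ‖φ s‖^2 := mul_nonneg (pow_nonneg hs.1.le 3) (sq_nonneg _)
    nlinarith
  have hfinpos : 0 < (μ.re + M) * P := by
    have hexp : (μ.re + M) * P = μ.re * P + M * P := by ring
    rw [hexp, hre', hR, hP]
    have hterm : d^2 * Q + M * (d^2 * A) = d^2 * (Q + M * A) := by ring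
    have h10 : 0 ≤ d^2 * (Q + M * A) := mul_nonneg (sq_nonneg d) hQMA
    have h11 : 0 < g⁻¹ * (h - M) * N :=
      mul_pos (mul_pos (inv_pos.mpr hg) (by linarith)) hN0
    nlinarith
  have hPne : P ≠ 0 := by
    intro hP0
    rw [hP0, mul_zero] at hfinpos
    exact lt_irrefl 0 hfinpos
  have him : μ.im = 0 := by
    rcases mul_eq_zero.mp him' with h' | h'
    · exact h'
    · exact absurd h' hPne
  exact ⟨hφ1ne, him, hfinpos⟩
end

section
/- Let d > 0, let γ, P : ℝ → ℝ be continuously differentiable, and let ψ : (0, 1] → ℝ be three times continuously differentiable with ψ″(s) + (3/s)ψ′(s) = −d²·γ(d²s²ψ(s)) − s⁻²·P(d²s²ψ(s)) for all s ∈ (0, 1]. Then the function w(s) := 2ψ(s) + sψ′(s) satisfies w″(s) + (3/s)w′(s) + ( d⁴ s² γ′(d²s²ψ(s)) + d² P′(d²s²ψ(s)) )·w(s) = −4 d² γ(d²s²ψ(s)) − 2 s⁻² P(d²s²ψ(s)) for all s ∈ (0, 1]. -/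
/-!
With `L[ψ] = ψ'' + (3/s)ψ'` and `w = 2ψ + sψ'` one has the commutation identity
`w'' + (3/s)w' = s·(L[ψ])' + 4·L[ψ]`, since `w` generates the scaling `ψ ↦ λ²ψ(λ·)` under which
`L` has weight `4`. Applying `s·d/ds + 4` to the right-hand side of the ODE by the chain rule, the
inner function `u = d²s²ψ` contributes `u' = d²·s·w`, which produces the potential term
`(d⁴s²γ'(u) + d²P'(u))·w`.
-/

open Set

section

variable {f g : ℝ → ℝ} {S : Set ℝ} {s : ℝ}

theorem HasDerivWithinAt.const_mul_add_id_mul (c : ℝ) {g' : ℝ}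
    (hf : HasDerivWithinAt f (g s) S s) (hg : HasDerivWithinAt g g' S s) :
    HasDerivWithinAt (fun t => c * f t + t * g t) ((c + 1) * g s + s * g') S s :=
  ((hf.const_mul c).fun_add ((hasDerivAt_id' s).hasDerivWithinAt.fun_mul hg)).congr_deriv
    (by ring)

theorem HasDerivWithinAt.add_const_div_id_mul (c : ℝ) {f' g' : ℝ} (hs : s ≠ 0)
    (hf : HasDerivWithinAt f f' S s) (hg : HasDerivWithinAt g g' S s) :
    HasDerivWithinAt (fun t => g t + c / t * f t) (g' - c / s ^ 2 * f s + c / s * f') S s := by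
  have hdiv : HasDerivWithinAt (fun t => c / t) (-(c / s ^ 2)) S s := by
    simpa only [div_eq_mul_inv, mul_neg] using (hasDerivWithinAt_inv hs S).const_mul c
  exact (hg.fun_add (hdiv.fun_mul hf)).congr_deriv (by ring)

theorem HasDerivWithinAt.const_mul_sq_mul (a : ℝ) {f' : ℝ}
    (hf : HasDerivWithinAt f f' S s) :
    HasDerivWithinAt (fun t => a * t ^ 2 * f t) (a * s * (2 * f s + s * f')) S s := by
  simpa only [mul_assoc] using
    (((hasDerivWithinAt_pow 2 s).fun_mul hf).const_mul a).congr_deriv (by push_cast; ring)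

theorem HasDerivWithinAt.neg_mul_comp_sub_inv_sq_mul_comp {γ P u : ℝ → ℝ} (a : ℝ) {u' : ℝ}
    (hs : s ≠ 0) (hu : HasDerivWithinAt u u' S s)
    (hγ : DifferentiableAt ℝ γ (u s)) (hP : DifferentiableAt ℝ P (u s)) :
    HasDerivWithinAt (fun t => -a * γ (u t) - (t ^ 2)⁻¹ * P (u t))
      (-a * deriv γ (u s) * u' + 2 / s ^ 3 * P (u s) - (s ^ 2)⁻¹ * deriv P (u s) * u') S s := by
  have hinv : HasDerivWithinAt (fun t : ℝ => (t ^ 2)⁻¹) (-(2 / s ^ 3)) S s :=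
    ((hasDerivWithinAt_pow 2 s).fun_inv (pow_ne_zero 2 hs)).congr_deriv
      (by field_simp; push_cast; ring)
  exact (((hγ.hasDerivAt.comp_hasDerivWithinAt s hu).const_mul (-a)).fun_sub
    (hinv.fun_mul (hP.hasDerivAt.comp_hasDerivWithinAt s hu))).congr_deriv
      (by rw [Function.comp_apply]; ring)

end

theorem good_unknown_ode_general
    (d : ℝ) (γ P : ℝ → ℝ) (hγ : ContDiff ℝ 1 γ) (hP : ContDiff ℝ 1 P)
    (ψ ψ₁ ψ₂ ψ₃ : ℝ → ℝ)
    (hψ₁ : ∀ s ∈ Ioc (0:ℝ) 1, HasDerivWithinAt ψ (ψ₁ s) (Ioc 0 1) s)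
    (hψ₂ : ∀ s ∈ Ioc (0:ℝ) 1, HasDerivWithinAt ψ₁ (ψ₂ s) (Ioc 0 1) s)
    (hψ₃ : ∀ s ∈ Ioc (0:ℝ) 1, HasDerivWithinAt ψ₂ (ψ₃ s) (Ioc 0 1) s)
    (hode : ∀ s ∈ Ioc (0:ℝ) 1,
      ψ₂ s + (3 / s) * ψ₁ s =
        -(d ^ 2) * γ (d ^ 2 * s ^ 2 * ψ s) - (s ^ 2)⁻¹ * P (d ^ 2 * s ^ 2 * ψ s)) :
    ∀ s ∈ Ioc (0:ℝ) 1,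
      HasDerivWithinAt (fun t => 2 * ψ t + t * ψ₁ t) (3 * ψ₁ s + s * ψ₂ s) (Ioc 0 1) s ∧
      HasDerivWithinAt (fun t => 3 * ψ₁ t + t * ψ₂ t) (4 * ψ₂ s + s * ψ₃ s) (Ioc 0 1) s ∧
      (4 * ψ₂ s + s * ψ₃ s) + (3 / s) * (3 * ψ₁ s + s * ψ₂ s)
          + (d ^ 4 * s ^ 2 * deriv γ (d ^ 2 * s ^ 2 * ψ s)
              + d ^ 2 * deriv P (d ^ 2 * s ^ 2 * ψ s)) * (2 * ψ s + s * ψ₁ s) =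
        -4 * d ^ 2 * γ (d ^ 2 * s ^ 2 * ψ s)
          - 2 * (s ^ 2)⁻¹ * P (d ^ 2 * s ^ 2 * ψ s) := by
  intro s hs
  have hs0 : s ≠ 0 := hs.1.ne'
  refine ⟨((hψ₁ s hs).const_mul_add_id_mul 2 (hψ₂ s hs)).congr_deriv (by ring),
    ((hψ₂ s hs).const_mul_add_id_mul 3 (hψ₃ s hs)).congr_deriv (by ring), ?_⟩
  have hlhs := (hψ₂ s hs).add_const_div_id_mul 3 hs0 (hψ₃ s hs)
  have hrhs := ((hψ₁ s hs).const_mul_sq_mul (d ^ 2)).neg_mul_comp_sub_inv_sq_mul_comp (d ^ 2) hs0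
    (hγ.differentiable one_ne_zero _) (hP.differentiable one_ne_zero _)
  have hode' : ψ₃ s - 3 / s ^ 2 * ψ₁ s + 3 / s * ψ₂ s = _ :=
    (uniqueDiffOn_Ioc 0 1 s hs).eq_deriv _ hlhs (hrhs.congr hode (hode s hs))
  linear_combination (norm := (field_simp; ring)) s * hode' + 4 * hode s hs

/-- (The good unknown `w = 2ψ + sψ'`.) Let `d > 0`, `γ, P : ℝ → ℝ` be `C¹`,
and let `ψ` be three times continuously differentiable on `(0,1]` (with derivative functions
`ψ₁, ψ₂, ψ₃`) satisfying `ψ'' + (3/s)ψ' = -d² γ(d²s²ψ) - s⁻² P(d²s²ψ)` on `(0,1]`. Then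
`w := 2ψ + sψ'` (whose first and second derivatives are `3ψ' + sψ''` and `4ψ'' + sψ'''`)
satisfies `w'' + (3/s)w' + (d⁴s²γ'(d²s²ψ) + d²P'(d²s²ψ)) w = -4d²γ(d²s²ψ) - 2s⁻²P(d²s²ψ)`
on `(0,1]`. -/
theorem good_unknown_ode
    (d : ℝ) (hd : 0 < d) (γ P : ℝ → ℝ) (hγ : ContDiff ℝ 1 γ) (hP : ContDiff ℝ 1 P)
    (ψ ψ₁ ψ₂ ψ₃ : ℝ → ℝ)
    (hψ₁ : ∀ s ∈ Ioc (0:ℝ) 1, HasDerivWithinAt ψ (ψ₁ s) (Ioc 0 1) s)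
    (hψ₂ : ∀ s ∈ Ioc (0:ℝ) 1, HasDerivWithinAt ψ₁ (ψ₂ s) (Ioc 0 1) s)
    (hψ₃ : ∀ s ∈ Ioc (0:ℝ) 1, HasDerivWithinAt ψ₂ (ψ₃ s) (Ioc 0 1) s)
    (hψ₃c : ContinuousOn ψ₃ (Ioc 0 1))
    (hode : ∀ s ∈ Ioc (0:ℝ) 1,
      ψ₂ s + (3 / s) * ψ₁ s =
        -(d ^ 2) * γ (d ^ 2 * s ^ 2 * ψ s) - (s ^ 2)⁻¹ * P (d ^ 2 * s ^ 2 * ψ s)) :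
    ∀ s ∈ Ioc (0:ℝ) 1,
      HasDerivWithinAt (fun t => 2 * ψ t + t * ψ₁ t) (3 * ψ₁ s + s * ψ₂ s) (Ioc 0 1) s ∧
      HasDerivWithinAt (fun t => 3 * ψ₁ t + t * ψ₂ t) (4 * ψ₂ s + s * ψ₃ s) (Ioc 0 1) s ∧
      (4 * ψ₂ s + s * ψ₃ s) + (3 / s) * (3 * ψ₁ s + s * ψ₂ s)
          + (d ^ 4 * s ^ 2 * deriv γ (d ^ 2 * s ^ 2 * ψ s)
              + d ^ 2 * deriv P (d ^ 2 * s ^ 2 * ψ s)) * (2 * ψ s + s * ψ₁ s) =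
        -4 * d ^ 2 * γ (d ^ 2 * s ^ 2 * ψ s)
          - 2 * (s ^ 2)⁻¹ * P (d ^ 2 * s ^ 2 * ψ s) :=
  good_unknown_ode_general d γ P hγ hP ψ ψ₁ ψ₂ ψ₃ hψ₁ hψ₂ hψ₃ hode
end
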